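/- arXiv:1408.1324 — 7 statements merged into one kernel-verified Lean document; each statement's English description precedes it below -/
import Mathlib

section
/- For every positive real d and every i ∈ {1,…,n}, the integral of |x_i|^d over the L_d unit ball B_d = {x : Σ_j |x_j|^d ≤ 1} equals (2^n / (n(n+d) d^{n-1})) · Γ(1/d)^n / Γ(n/d). -/
open MeasureTheory Real Set ENNReal

lemma aux_integrableOn {d q : ℝ} (hd : 0 < d) (hq : -1 < q) :
    IntegrableOn (fun s : ℝ => s ^ q * Real.exp (-s ^ d)) (Set.Ioi 0) := by
  have h0 : (0:ℝ) < (q + 1) / d := div_pos (by linarith) hd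
  have hf : IntegrableOn (fun u : ℝ => u ^ ((q + 1) / d - 1) * Real.exp (-u)) (Set.Ioi 0) := by
    refine (Real.GammaIntegral_convergent h0).congr_fun (fun x hx => mul_comm _ _) measurableSet_Ioi
  have := (integrableOn_Ioi_comp_rpow_iff'
      (fun u : ℝ => u ^ ((q + 1) / d - 1) * Real.exp (-u)) hd.ne').mpr hf
  refine this.congr_fun (fun x hx => ?_) measurableSet_Ioi
  have hx' : (0:ℝ) < x := hx
  beta_reduce
  rw [smul_eq_mul, ← Real.rpow_mul hx'.le, ← mul_assoc, ← Real.rpow_add hx']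
  congr 2
  field_simp
  ring

lemma aux_integrable_comp_abs {f : ℝ → ℝ} (hf : IntegrableOn f (Set.Ioi 0)) :
    Integrable fun x : ℝ => f |x| := by
  have hf' : IntegrableOn (fun x => f |x|) (Set.Ioi 0) :=
    hf.congr_fun (fun x hx => by rw [abs_of_pos hx]) measurableSet_Ioi
  have int_Iic : IntegrableOn (fun x ↦ f |x|) (Set.Iic 0) := by
    rw [← Measure.map_neg_eq_self (volume : Measure ℝ)]
    have m : MeasurableEmbedding fun x : ℝ => -x := (Homeomorph.neg ℝ).measurableEmbedding
    rw [m.integrableOn_map_iff]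
    simp_rw [Function.comp_def, abs_neg, Set.neg_preimage, Set.neg_Iic, neg_zero]
    exact (integrableOn_Ici_iff_integrableOn_Ioi).mpr hf'
  have h := int_Iic.union hf'
  rwa [Set.Iic_union_Ioi, integrableOn_univ] at h

theorem integral_abs_pow_over_Lp_unit_ball
    (n : ℕ) (d : ℝ) (hd : 0 < d) (i : Fin n) :
    ∫ x in {x : Fin n → ℝ | ∑ j, |x j| ^ d ≤ 1}, |x i| ^ d
      = (2 ^ n / (n * (n + d) * d ^ (n - 1))) *
          Real.Gamma (1 / d) ^ n / Real.Gamma (n / d) := by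
  have hn : 0 < n := i.pos
  set ρ : (Fin n → ℝ) → ℝ := fun x => ∑ j, |x j| ^ d with hρdef
  set B : Set (Fin n → ℝ) := {x | ρ x ≤ 1} with hBdef
  have hρm : Measurable ρ := by fun_prop
  have hgm : Measurable fun x : Fin n → ℝ => |x i| ^ d := by fun_prop
  have hBm : MeasurableSet B := measurableSet_le hρm measurable_const
  have hρ0 : ∀ x, 0 ≤ ρ x := fun x => Finset.sum_nonneg fun j _ => Real.rpow_nonneg (abs_nonneg _) _
  have hg0 : ∀ x : Fin n → ℝ, 0 ≤ |x i| ^ d := fun x => Real.rpow_nonneg (abs_nonneg _) _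
  set I : ℝ≥0∞ := ∫⁻ x in B, ENNReal.ofReal (|x i| ^ d) with hIdef
  set J : ℝ := (2 * ((1/d) * Real.Gamma ((d+1)/d))) * (2 * Real.Gamma (1/d + 1)) ^ (n - 1)
    with hJdef
  -- Step A : the full-space integral equals `J`
  set f : Fin n → ℝ → ℝ :=
    fun j t => if j = i then |t| ^ d * Real.exp (-|t| ^ d) else Real.exp (-|t| ^ d) with hfdef
  have hA1 : ∀ x : Fin n → ℝ, |x i| ^ d * Real.exp (-ρ x) = ∏ j, f j (x j) := by
    intro x
    rw [← Finset.mul_prod_erase Finset.univ _ (Finset.mem_univ i),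
      Finset.prod_congr rfl (fun j hj => show f j (x j) = Real.exp (-|x j| ^ d) by
        simp [hfdef, Finset.ne_of_mem_erase hj])]
    simp only [hfdef, if_pos rfl]
    rw [mul_assoc, Finset.mul_prod_erase Finset.univ (fun j => Real.exp (-|x j| ^ d))
      (Finset.mem_univ i), ← Real.exp_sum]
    simp [hρdef]
  have hfint : ∀ j, Integrable (f j) := by
    intro j
    rcases eq_or_ne j i with h | h
    · simpa [hfdef, h] using
        aux_integrable_comp_abs (f := fun s => s ^ d * Real.exp (-s ^ d))
          (aux_integrableOn hd (by linarith))
    · have := aux_integrable_comp_abs (f := fun s => s ^ (0:ℝ) * Real.exp (-s ^ d))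
        (aux_integrableOn hd (by norm_num))
      simpa [hfdef, h, Real.rpow_zero] using this
  have hf0 : ∀ j t, 0 ≤ f j t := by
    intro j t
    rcases eq_or_ne j i with h | h <;>
      simp [hfdef, h] <;> positivity
  have hA2 : Integrable fun x : Fin n → ℝ => ∏ j, f j (x j) := Integrable.fintype_prod hfint
  have hA3 : ∀ j, ∫ t : ℝ, f j t =
      if j = i then 2 * ((1/d) * Real.Gamma ((d+1)/d)) else 2 * Real.Gamma (1/d + 1) := by
    intro j
    rcases eq_or_ne j i with h | h
    · simp only [hfdef, h, if_pos rfl]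
      rw [integral_comp_abs (f := fun s => s ^ d * Real.exp (-s ^ d)),
        integral_rpow_mul_exp_neg_rpow hd (by linarith)]
      simp
    · simp only [hfdef, if_neg h]
      rw [integral_comp_abs (f := fun s => Real.exp (-s ^ d)), integral_exp_neg_rpow hd]
  have hA4 : ∫ x : Fin n → ℝ, ∏ j, f j (x j) = J := by
    rw [integral_fintype_prod_volume_eq_prod (f := f),
      ← Finset.mul_prod_erase Finset.univ _ (Finset.mem_univ i), hA3 i, if_pos rfl,
      Finset.prod_congr rfl (fun j hj => by rw [hA3 j, if_neg (Finset.ne_of_mem_erase hj)]),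
      Finset.prod_const, Finset.card_erase_of_mem (Finset.mem_univ i), Finset.card_univ,
      Fintype.card_fin]
  have hA5 : (∫⁻ x : Fin n → ℝ, ENNReal.ofReal (|x i| ^ d * Real.exp (-ρ x)))
      = ENNReal.ofReal J := by
    have h1 : (∫⁻ x : Fin n → ℝ, ENNReal.ofReal (|x i| ^ d * Real.exp (-ρ x)))
        = ∫⁻ x : Fin n → ℝ, ENNReal.ofReal (∏ j, f j (x j)) :=
      lintegral_congr fun x => by rw [hA1]
    rw [h1, ← ofReal_integral_eq_lintegral_ofReal hA2
      (Filter.Eventually.of_forall fun x => Finset.prod_nonneg fun j _ => hf0 j (x j)), hA4]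
  -- Step B : layer cake
  have hB1 : ∀ a : ℝ, (∫⁻ t in Set.Ici a, ENNReal.ofReal (Real.exp (-t)))
      = ENNReal.ofReal (Real.exp (-a)) := by
    intro a
    rw [← Measure.restrict_congr_set Ioi_ae_eq_Ici,
      ← ofReal_integral_eq_lintegral_ofReal ?_ (Filter.Eventually.of_forall fun t => (Real.exp_pos _).le),
      integral_exp_neg_Ioi]
    have := exp_neg_integrableOn_Ioi a (one_pos)
    exact (by simpa using this : IntegrableOn (fun x => rexp (-x)) (Ioi a))
  have hB2 : ∀ x : Fin n → ℝ, ENNReal.ofReal (|x i| ^ d * Real.exp (-ρ x))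
      = ∫⁻ t in Set.Ici (ρ x), ENNReal.ofReal (|x i| ^ d * Real.exp (-t)) := by
    intro x
    simp_rw [ENNReal.ofReal_mul (hg0 x)]
    rw [lintegral_const_mul' _ _ ENNReal.ofReal_ne_top, hB1]
  set S : Set ((Fin n → ℝ) × ℝ) := {p | ρ p.1 ≤ p.2} with hSdef
  have hSm : MeasurableSet S := measurableSet_le (hρm.comp measurable_fst) measurable_snd
  set F : (Fin n → ℝ) × ℝ → ℝ≥0∞ :=
    S.indicator fun p => ENNReal.ofReal (|p.1 i| ^ d * Real.exp (-p.2)) with hFdef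
  have hFm : Measurable F := by
    refine Measurable.indicator ?_ hSm
    fun_prop
  set K : ℝ → ℝ≥0∞ := fun t => ∫⁻ x in {x : Fin n → ℝ | ρ x ≤ t}, ENNReal.ofReal (|x i| ^ d)
    with hKdef
  have hB3 : (∫⁻ x : Fin n → ℝ, ENNReal.ofReal (|x i| ^ d * Real.exp (-ρ x)))
      = ∫⁻ t : ℝ, ENNReal.ofReal (Real.exp (-t)) * K t := by
    calc
      _ = ∫⁻ x : Fin n → ℝ, ∫⁻ t : ℝ, F (x, t) := by
        refine lintegral_congr fun x => ?_
        rw [hB2 x, ← lintegral_indicator measurableSet_Ici]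
        refine lintegral_congr fun t => ?_
        simp [hFdef, hSdef, Set.indicator_apply, Set.mem_Ici]
      _ = ∫⁻ t : ℝ, ∫⁻ x : Fin n → ℝ, F (x, t) := by
        exact lintegral_lintegral_swap hFm.aemeasurable
      _ = ∫⁻ t : ℝ, ENNReal.ofReal (Real.exp (-t)) * K t := by
        refine lintegral_congr fun t => ?_
        have : ∀ x : Fin n → ℝ, F (x, t)
            = Set.indicator {x : Fin n → ℝ | ρ x ≤ t}
                (fun x => ENNReal.ofReal (|x i| ^ d * Real.exp (-t))) x := by
          intro x
          simp [hFdef, hSdef, Set.indicator_apply]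
        rw [lintegral_congr this, lintegral_indicator (measurableSet_le hρm measurable_const)]
        simp_rw [ENNReal.ofReal_mul (hg0 _)]
        rw [lintegral_mul_const' _ _ ENNReal.ofReal_ne_top, mul_comm]
  -- Step C : scaling
  have hC : ∀ t : ℝ, 0 < t →
      K t = ENNReal.ofReal (t ^ ((n:ℝ)/d) * t) * I := by
    intro t ht
    set c : ℝ := t ^ (1/d) with hcdef
    have hc : 0 < c := Real.rpow_pos_of_pos ht _
    have hcd : c ^ d = t := by
      rw [hcdef, ← Real.rpow_mul ht.le, one_div_mul_cancel hd.ne', Real.rpow_one]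
    have hcn : c ^ n = t ^ ((n:ℝ)/d) := by
      rw [← Real.rpow_natCast c n, hcdef, ← Real.rpow_mul ht.le]
      congr 1
      ring
    have hsc : ∀ (x : Fin n → ℝ) (j : Fin n), |(c • x) j| ^ d = t * |x j| ^ d := by
      intro x j
      rw [Pi.smul_apply, smul_eq_mul, abs_mul,
        Real.mul_rpow (abs_nonneg _) (abs_nonneg _), abs_of_pos hc, hcd]
    have hρc : ∀ x : Fin n → ℝ, ρ (c • x) = t * ρ x := by
      intro x
      simp only [hρdef]
      rw [Finset.mul_sum]
      exact Finset.sum_congr rfl fun j _ => hsc x j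
    set H : (Fin n → ℝ) → ℝ≥0∞ :=
      Set.indicator {x : Fin n → ℝ | ρ x ≤ t} (fun x => ENNReal.ofReal (|x i| ^ d)) with hHdef
    have hHm : Measurable H :=
      Measurable.indicator hgm.ennreal_ofReal (measurableSet_le hρm measurable_const)
    have key := lintegral_map (μ := (volume : Measure (Fin n → ℝ))) hHm (measurable_const_smul (M := ℝ) c :
      Measurable fun x : Fin n → ℝ => c • x)
    rw [Measure.map_addHaar_smul (volume : Measure (Fin n → ℝ)) hc.ne',
      lintegral_smul_measure] at key
    have hright : (∫⁻ x : Fin n → ℝ, H (c • x)) = ENNReal.ofReal t * I := by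
      have h1 : ∀ x : Fin n → ℝ, H (c • x)
          = Set.indicator B (fun x => ENNReal.ofReal (t * |x i| ^ d)) x := by
        intro x
        simp only [hHdef, Set.indicator_apply, Set.mem_setOf_eq, hρc, hsc, hBdef]
        simp [mul_le_iff_le_one_right ht]
      rw [lintegral_congr h1, lintegral_indicator hBm]
      simp_rw [ENNReal.ofReal_mul ht.le]
      rw [lintegral_const_mul' _ _ ENNReal.ofReal_ne_top, hIdef]
    have hleft : (∫⁻ x : Fin n → ℝ, H x) = K t := by
      rw [hHdef, lintegral_indicator (measurableSet_le hρm measurable_const), hKdef]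
    rw [hright, hleft] at key
    -- key : ENNReal.ofReal |(c ^ finrank ℝ (Fin n → ℝ))⁻¹| * K t = ENNReal.ofReal t * I
    have hfr : Module.finrank ℝ (Fin n → ℝ) = n := by
      simp [Module.finrank_fintype_fun_eq_card]
    rw [hfr] at key
    have hcn0 : (0:ℝ) < c ^ n := pow_pos hc n
    calc K t = ENNReal.ofReal (c ^ n) *
          (ENNReal.ofReal |((c ^ n)⁻¹)| * K t) := by
          rw [← mul_assoc, abs_of_pos (inv_pos.mpr hcn0), ← ENNReal.ofReal_mul hcn0.le,
            mul_inv_cancel₀ hcn0.ne', ENNReal.ofReal_one, one_mul]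
      _ = ENNReal.ofReal (c ^ n) * (ENNReal.ofReal t * I) := by rw [← key, smul_eq_mul]
      _ = ENNReal.ofReal (t ^ ((n:ℝ)/d) * t) * I := by
          rw [← mul_assoc, ← ENNReal.ofReal_mul (by positivity), hcn]
  -- Step D : assemble
  have hne : ∀ᵐ t : ℝ, t ≠ 0 := by
    refine ae_iff.mpr ?_
    simp [Real.volume_singleton]
  have hK0 : ∀ t : ℝ, t < 0 → K t = 0 := by
    intro t ht'
    have hset : {x : Fin n → ℝ | ρ x ≤ t} = ∅ := by
      ext x
      simp only [Set.mem_setOf_eq, Set.mem_empty_iff_false, iff_false, not_le]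
      exact lt_of_lt_of_le ht' (hρ0 x)
    simp [hKdef, hset]
  have hGint : IntegrableOn (fun t : ℝ => t ^ ((n:ℝ)/d) * t * Real.exp (-t)) (Set.Ioi 0) := by
    have h2 : (0:ℝ) < (n:ℝ)/d + 2 := by positivity
    refine (Real.GammaIntegral_convergent h2).congr_fun (fun x hx => ?_) measurableSet_Ioi
    have hx' : (0:ℝ) < x := hx
    beta_reduce
    rw [mul_comm, show (n:ℝ)/d + 2 - 1 = (n:ℝ)/d + 1 by ring, Real.rpow_add_one hx'.ne']
  have hGval : ∫ t in Set.Ioi (0:ℝ), t ^ ((n:ℝ)/d) * t * Real.exp (-t)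
      = Real.Gamma ((n:ℝ)/d + 2) := by
    have h1 : (-1:ℝ) < (n:ℝ)/d + 1 := by
      have : (0:ℝ) ≤ (n:ℝ)/d := by positivity
      linarith
    calc
      _ = ∫ t in Set.Ioi (0:ℝ), t ^ ((n:ℝ)/d + 1) * Real.exp (-t ^ (1:ℝ)) := by
        refine setIntegral_congr_fun measurableSet_Ioi fun t ht => ?_
        have ht' : (0:ℝ) < t := ht
        rw [Real.rpow_one, Real.rpow_add_one ht'.ne']
      _ = 1/1 * Real.Gamma (((n:ℝ)/d + 1 + 1)/1) := integral_rpow_mul_exp_neg_rpow one_pos h1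
      _ = Real.Gamma ((n:ℝ)/d + 2) := by
        norm_num
        congr 1
        ring
  have hD : ENNReal.ofReal J = ENNReal.ofReal (Real.Gamma ((n:ℝ)/d + 2)) * I := by
    rw [← hA5, hB3]
    calc
      _ = ∫⁻ t : ℝ, (Set.Ioi (0:ℝ)).indicator
            (fun t => ENNReal.ofReal (Real.exp (-t)) * K t) t := by
        refine lintegral_congr_ae (hne.mono fun t htne => ?_)
        rcases lt_trichotomy t 0 with h | h | h
        · have hni : t ∉ Set.Ioi (0:ℝ) := by
            simp only [Set.mem_Ioi, not_lt]
            exact h.le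
          simp only [Set.indicator_of_notMem hni, hK0 t h, mul_zero]
        · exact absurd h htne
        · exact (Set.indicator_of_mem h
            (fun t => ENNReal.ofReal (Real.exp (-t)) * K t)).symm
      _ = ∫⁻ t in Set.Ioi (0:ℝ), ENNReal.ofReal (Real.exp (-t)) * K t :=
        lintegral_indicator measurableSet_Ioi _
      _ = ∫⁻ t in Set.Ioi (0:ℝ),
            ENNReal.ofReal (t ^ ((n:ℝ)/d) * t * Real.exp (-t)) * I := by
        refine setLIntegral_congr_fun measurableSet_Ioi (fun t ht => ?_)
        rw [hC t ht, ← mul_assoc, ← ENNReal.ofReal_mul (Real.exp_pos _).le,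
          mul_comm (Real.exp (-t)) _]
      _ = (∫⁻ t in Set.Ioi (0:ℝ),
            ENNReal.ofReal (t ^ ((n:ℝ)/d) * t * Real.exp (-t))) * I := by
        refine lintegral_mul_const _ ?_
        fun_prop
      _ = ENNReal.ofReal (Real.Gamma ((n:ℝ)/d + 2)) * I := by
        congr 1
        rw [← hGval]
        refine (ofReal_integral_eq_lintegral_ofReal hGint ?_).symm
        refine (ae_restrict_iff' measurableSet_Ioi).mpr (ae_of_all _ fun t ht => ?_)
        have ht' : (0:ℝ) < t := ht
        exact mul_nonneg (mul_nonneg (Real.rpow_nonneg ht'.le _) ht'.le) (Real.exp_pos _).le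
  -- Step E : conclude
  have hGpos : 0 < Real.Gamma ((n:ℝ)/d + 2) :=
    Real.Gamma_pos_of_pos (by positivity)
  have hJ0 : 0 ≤ J := by
    have h1 : 0 < Real.Gamma ((d+1)/d) := Real.Gamma_pos_of_pos (by positivity)
    have h2 : 0 < Real.Gamma (1/d + 1) := Real.Gamma_pos_of_pos (by positivity)
    positivity
  have hIt : I.toReal = J / Real.Gamma ((n:ℝ)/d + 2) := by
    have := congrArg ENNReal.toReal hD
    rw [ENNReal.toReal_ofReal hJ0, ENNReal.toReal_mul, ENNReal.toReal_ofReal hGpos.le] at this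
    rw [this]
    field_simp
  have hInt : ∫ x in {x : Fin n → ℝ | ∑ j, |x j| ^ d ≤ 1}, |x i| ^ d = I.toReal := by
    rw [hIdef]
    exact integral_eq_lintegral_of_nonneg_ae (Filter.Eventually.of_forall fun x => hg0 x)
      hgm.aestronglyMeasurable
  rw [hInt, hIt]
  -- final real-number algebra
  obtain ⟨m, rfl⟩ : ∃ m, n = m + 1 := ⟨n - 1, (Nat.succ_pred_eq_of_pos hn).symm⟩
  have hd0 : d ≠ 0 := hd.ne'
  have hG1 : (0:ℝ) < Real.Gamma (1/d) := Real.Gamma_pos_of_pos (by positivity)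
  have hGn : (0:ℝ) < Real.Gamma ((↑(m+1):ℝ)/d) := Real.Gamma_pos_of_pos (by positivity)
  have e1 : Real.Gamma ((d+1)/d) = (1/d) * Real.Gamma (1/d) := by
    rw [show (d+1)/d = 1/d + 1 by field_simp; ring,
      Real.Gamma_add_one (one_div_ne_zero hd0)]
  have e2 : Real.Gamma (1/d + 1) = (1/d) * Real.Gamma (1/d) :=
    Real.Gamma_add_one (one_div_ne_zero hd0)
  have e3 : Real.Gamma ((↑(m+1):ℝ)/d + 2)
      = ((↑(m+1):ℝ)/d + 1) * ((↑(m+1):ℝ)/d) * Real.Gamma ((↑(m+1):ℝ)/d) := by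
    rw [show (↑(m+1):ℝ)/d + 2 = ((↑(m+1):ℝ)/d + 1) + 1 by ring,
      Real.Gamma_add_one (by positivity), Real.Gamma_add_one (by positivity)]
    ring
  rw [hJdef, e1, e2, e3]
  simp only [Nat.add_sub_cancel]
  push_cast
  have hm1 : ((m:ℝ)+1) ≠ 0 := by positivity
  have hmd : ((m:ℝ)+1)/d + 1 ≠ 0 := by positivity
  field_simp
  ring_nf
  rw [← mul_pow, mul_inv_cancel₀ hd0, one_pow]
  ring
end

section
/- For every positive real d and every i ∈ {1,…,n}, ∫_{B_d} |x_i|^d dx = vol(B_d)/(n+d), where B_d = {x ∈ R^n : Σ_j |x_j|^d ≤ 1}. -/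
open MeasureTheory Real Set Pointwise

section lpAux
variable {n : ℕ} {d : ℝ}

private lemma lp_cont (hd : 0 < d) :
    Continuous (fun x : Fin n → ℝ => ∑ j, |x j| ^ d) := by
  refine continuous_finset_sum _ fun j _ => ?_
  exact (Real.continuous_rpow_const hd.le).comp ((continuous_apply j).abs)

private lemma lp_meas (hd : 0 < d) (c : ℝ) :
    MeasurableSet {x : Fin n → ℝ | ∑ j, |x j| ^ d ≤ c} :=
  measurableSet_le (lp_cont hd).measurable measurable_const

private lemma lp_term_le {x : Fin n → ℝ} {c : ℝ}
    (hx : ∑ j, |x j| ^ d ≤ c) (j : Fin n) : |x j| ^ d ≤ c := by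
  refine le_trans ?_ hx
  exact Finset.single_le_sum (fun k _ => Real.rpow_nonneg (abs_nonneg _) d) (Finset.mem_univ j)

private lemma lp_subset_cube (hd : 0 < d) :
    {x : Fin n → ℝ | ∑ j, |x j| ^ d ≤ 1} ⊆ Set.pi Set.univ (fun _ => Icc (-1:ℝ) 1) := by
  intro x hx j _
  have h := lp_term_le hx j
  have : |x j| ≤ 1 := by
    by_contra hc
    push_neg at hc
    have := (Real.one_lt_rpow_iff_of_pos (lt_trans one_pos hc) (y := d)).2 (Or.inl ⟨hc, hd⟩)
    linarith
  exact abs_le.1 this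

private lemma lp_vol_lt_top (hd : 0 < d) :
    volume {x : Fin n → ℝ | ∑ j, |x j| ^ d ≤ 1} < ⊤ := by
  refine lt_of_le_of_lt (measure_mono (lp_subset_cube hd)) ?_
  rw [volume_pi_pi]
  exact WithTop.prod_lt_top fun _ _ => (by simp : volume (Icc (-1:ℝ) 1) < ⊤)

private lemma lp_smul_set (hd : 0 < d) {c : ℝ} (hc : 0 < c) :
    (c ^ (1/d)) • {x : Fin n → ℝ | ∑ j, |x j| ^ d ≤ 1}
      = {x : Fin n → ℝ | ∑ j, |x j| ^ d ≤ c} := by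
  set r := c ^ (1/d) with hr_def
  have hr : 0 < r := Real.rpow_pos_of_pos hc _
  have hrd : r ^ d = c := by
    rw [hr_def, ← Real.rpow_mul hc.le, one_div, inv_mul_cancel₀ hd.ne', Real.rpow_one]
  ext x
  rw [Set.mem_smul_set_iff_inv_smul_mem₀ hr.ne']
  simp only [Set.mem_setOf_eq, Pi.smul_apply, smul_eq_mul]
  have key : ∀ j, |r⁻¹ * x j| ^ d = c⁻¹ * |x j| ^ d := by
    intro j
    rw [abs_mul, abs_of_pos (inv_pos.2 hr), Real.mul_rpow (inv_pos.2 hr).le (abs_nonneg _),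
      Real.inv_rpow hr.le, hrd]
  simp only [key]
  rw [← Finset.mul_sum, inv_mul_eq_div, div_le_one hc]

private lemma lp_vol_scale (hd : 0 < d) {c : ℝ} (hc : 0 < c) :
    volume {x : Fin n → ℝ | ∑ j, |x j| ^ d ≤ c}
      = ENNReal.ofReal (c ^ ((n:ℝ)/d)) * volume {x : Fin n → ℝ | ∑ j, |x j| ^ d ≤ 1} := by
  rw [← lp_smul_set hd hc, Measure.addHaar_smul, Module.finrank_fin_fun]
  congr 2
  rw [abs_of_nonneg (pow_nonneg (Real.rpow_nonneg hc.le _) _),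
    ← Real.rpow_natCast (c ^ (1/d)) n, ← Real.rpow_mul hc.le]
  ring_nf

private lemma lp_symm (hd : 0 < d) (i j : Fin n) :
    ∫ x in {x : Fin n → ℝ | ∑ k, |x k| ^ d ≤ 1}, |x i| ^ d
      = ∫ x in {x : Fin n → ℝ | ∑ k, |x k| ^ d ≤ 1}, |x j| ^ d := by
  set e := Equiv.swap i j with he
  set T := MeasurableEquiv.piCongrLeft (fun _ : Fin n => ℝ) e with hT_def
  have hT : ∀ (x : Fin n → ℝ) (k : Fin n), T x k = x (e.symm k) := by
    intro x k
    conv_lhs => rw [← e.apply_symm_apply k]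
    rw [hT_def, MeasurableEquiv.coe_piCongrLeft]
    exact Equiv.piCongrLeft_apply_apply (fun _ => ℝ) e x (e.symm k)
  have MP := volume_measurePreserving_piCongrLeft (fun _ : Fin n => ℝ) e
  have hpre : T ⁻¹' {x : Fin n → ℝ | ∑ k, |x k| ^ d ≤ 1}
      = {x : Fin n → ℝ | ∑ k, |x k| ^ d ≤ 1} := by
    ext x
    simp only [Set.mem_preimage, Set.mem_setOf_eq, hT]
    rw [Equiv.sum_comp e.symm (fun k => |x k| ^ d)]
  calc ∫ x in {x : Fin n → ℝ | ∑ k, |x k| ^ d ≤ 1}, |x i| ^ d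
      = ∫ x in {x : Fin n → ℝ | ∑ k, |x k| ^ d ≤ 1}, |x i| ^ d
        ∂(Measure.map T volume) := by rw [MP.map_eq]
    _ = ∫ x in T ⁻¹' {x : Fin n → ℝ | ∑ k, |x k| ^ d ≤ 1}, |T x i| ^ d := by
        rw [setIntegral_map_equiv]
    _ = ∫ x in {x : Fin n → ℝ | ∑ k, |x k| ^ d ≤ 1}, |x j| ^ d := by
        rw [hpre]
        congr 1
        ext x
        rw [hT, he, Equiv.symm_swap, Equiv.swap_apply_left]

private lemma lp_integrable (hd : 0 < d) (j : Fin n) :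
    IntegrableOn (fun x : Fin n → ℝ => |x j| ^ d)
      {x : Fin n → ℝ | ∑ k, |x k| ^ d ≤ 1} := by
  refine Integrable.mono' ((integrableOn_const_iff (C := (1:ℝ))).2 (Or.inr (lp_vol_lt_top hd)))
    (((Real.continuous_rpow_const hd.le).comp
      ((continuous_apply j).abs)).aestronglyMeasurable) ?_
  rw [ae_restrict_iff' (lp_meas hd 1)]
  filter_upwards with x hx
  rw [Real.norm_eq_abs, abs_of_nonneg (Real.rpow_nonneg (abs_nonneg _) d)]
  exact lp_term_le hx j

end lpAux

theorem integral_abs_pow_over_Lp_unit_ball_eq_volume_div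
    (n : ℕ) (d : ℝ) (hd : 0 < d) (i : Fin n) :
    ∫ x in {x : Fin n → ℝ | ∑ j, |x j| ^ d ≤ 1}, |x i| ^ d
      = (volume {x : Fin n → ℝ | ∑ j, |x j| ^ d ≤ 1}).toReal / (n + d) := by
  have hn : 0 < n := i.pos
  set B := {x : Fin n → ℝ | ∑ j, |x j| ^ d ≤ 1} with hB
  set V := volume B with hV
  have hVtop : V ≠ ⊤ := (lp_vol_lt_top hd).ne
  set p : ℝ := (n:ℝ)/d with hp
  have hp_pos : 0 < p := div_pos (Nat.cast_pos.2 hn) hd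
  -- the integral of the sum equals n times the integral in question
  have h1 : ∫ x in B, (∑ j, |x j| ^ d) = (n:ℝ) * ∫ x in B, |x i| ^ d := by
    rw [integral_finset_sum _ (fun j _ => lp_integrable hd j)]
    rw [Finset.sum_congr rfl (fun j _ => lp_symm hd j i), Finset.sum_const,
      Finset.card_univ, Fintype.card_fin, nsmul_eq_mul]
  -- layer cake
  have hsum_int : IntegrableOn (fun x : Fin n → ℝ => ∑ j, |x j| ^ d) B :=
    integrable_finset_sum _ (fun j _ => lp_integrable hd j)
  have hnn : 0 ≤ᵐ[volume.restrict B] (fun x : Fin n → ℝ => ∑ j, |x j| ^ d) := by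
    filter_upwards with x
    exact Finset.sum_nonneg fun j _ => Real.rpow_nonneg (abs_nonneg _) d
  have h2 : ∫ x in B, (∑ j, |x j| ^ d)
      = ∫ t in Set.Ioi (0:ℝ),
          ((volume.restrict B) {a : Fin n → ℝ | t < ∑ j, |a j| ^ d}).toReal :=
    hsum_int.integral_eq_integral_meas_lt hnn
  have h3 : ∀ t ∈ Set.Ioi (0:ℝ),
      ((volume.restrict B) {a : Fin n → ℝ | t < ∑ j, |a j| ^ d}).toReal
        = (Set.Ioc (0:ℝ) 1).indicator (fun t => V.toReal * (1 - t ^ p)) t := by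
    intro t ht
    rw [Set.mem_Ioi] at ht
    have hmeas : MeasurableSet {a : Fin n → ℝ | t < ∑ j, |a j| ^ d} :=
      measurableSet_lt measurable_const (lp_cont hd).measurable
    rw [Measure.restrict_apply hmeas]
    rcases le_or_gt t 1 with htle | htgt
    · have hset : {a : Fin n → ℝ | t < ∑ j, |a j| ^ d} ∩ B
          = B \ {x : Fin n → ℝ | ∑ j, |x j| ^ d ≤ t} := by
        ext x
        simp only [Set.mem_inter_iff, Set.mem_setOf_eq, Set.mem_diff, hB, not_le]
        tauto
      have hsub : {x : Fin n → ℝ | ∑ j, |x j| ^ d ≤ t} ⊆ B := by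
        intro x hx
        exact le_trans hx htle
      have hSt : volume {x : Fin n → ℝ | ∑ j, |x j| ^ d ≤ t}
          = ENNReal.ofReal (t ^ p) * V := lp_vol_scale hd ht
      have htp_le : t ^ p ≤ 1 := Real.rpow_le_one ht.le htle hp_pos.le
      have hle : ENNReal.ofReal (t ^ p) * V ≤ V := by
        calc ENNReal.ofReal (t ^ p) * V ≤ 1 * V := by
              exact mul_le_mul_left (by simpa using ENNReal.ofReal_le_one.2 htp_le) V
          _ = V := one_mul V
      rw [hset, measure_diff hsub (lp_meas hd t).nullMeasurableSet
        (by rw [hSt]; exact (lt_of_le_of_lt hle (lp_vol_lt_top hd)).ne), hSt,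
        ENNReal.toReal_sub_of_le hle hVtop, ENNReal.toReal_mul,
        ENNReal.toReal_ofReal (Real.rpow_nonneg ht.le p)]
      rw [Set.indicator_of_mem (Set.mem_Ioc.2 ⟨ht, htle⟩)]
      ring
    · have hset : {a : Fin n → ℝ | t < ∑ j, |a j| ^ d} ∩ B = ∅ := by
        ext x
        simp only [Set.mem_inter_iff, Set.mem_setOf_eq, Set.mem_empty_iff_false,
          iff_false, hB, not_and, not_le]
        intro hx
        linarith
      rw [hset, measure_empty, ENNReal.toReal_zero,
        Set.indicator_of_notMem (by simp [Set.mem_Ioc]; intro; linarith)]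
  have h4 : ∫ t in Set.Ioi (0:ℝ),
      ((volume.restrict B) {a : Fin n → ℝ | t < ∑ j, |a j| ^ d}).toReal
        = ∫ t in Set.Ioc (0:ℝ) 1, V.toReal * (1 - t ^ p) := by
    rw [setIntegral_congr_fun measurableSet_Ioi h3, setIntegral_indicator measurableSet_Ioc,
      Set.inter_eq_self_of_subset_right Set.Ioc_subset_Ioi_self]
  have hIp : IntervalIntegrable (fun t : ℝ => t ^ p) volume 0 1 :=
    intervalIntegral.intervalIntegrable_rpow' (by linarith)
  have h5 : ∫ t in Set.Ioc (0:ℝ) 1, V.toReal * (1 - t ^ p)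
      = V.toReal * ((n:ℝ) / (n + d)) := by
    rw [← intervalIntegral.integral_of_le zero_le_one,
      intervalIntegral.integral_const_mul,
      intervalIntegral.integral_sub intervalIntegrable_const hIp,
      integral_rpow (Or.inl (by linarith)),
      intervalIntegral.integral_const]
    rw [Real.one_rpow, Real.zero_rpow (by linarith)]
    have hndpos : (0:ℝ) < (n:ℝ) + d := by positivity
    have h6 : 1 - 1 / (p + 1) = (n:ℝ) / (n + d) := by
      rw [hp]
      field_simp
      ring
    simp only [smul_eq_mul, mul_one, sub_zero]
    rw [h6]
  have hkey : (n:ℝ) * ∫ x in B, |x i| ^ d = V.toReal * ((n:ℝ) / (n + d)) := by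
    rw [← h1, h2, h4, h5]
  have hn' : ((n:ℝ)) ≠ 0 := Nat.cast_ne_zero.2 hn.ne'
  have hndpos : (0:ℝ) < (n:ℝ) + d := by positivity
  have : (n:ℝ) * (∫ x in B, |x i| ^ d) = (n:ℝ) * (V.toReal / (n + d)) := by
    rw [hkey]; ring
  exact mul_left_cancel₀ hn' this
end

section
/- If g is a homogeneous polynomial of even degree d in n variables with fewer than n nonzero coefficients (in the monomial basis), then the sublevel set G = {x ∈ R^n : g(x) ≤ 1} has infinite Lebesgue volume. -/
open MeasureTheory MvPolynomial

theorem sparse_homogeneous_sublevel_infinite_volume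
    (n d : ℕ) (hd : Even d) (hd0 : 2 ≤ d)
    (g : MvPolynomial (Fin n) ℝ) (hg : g.IsHomogeneous d)
    (hsparse : g.support.card < n) :
    volume {x : Fin n → ℝ | eval x g ≤ 1} = ⊤ := by
  classical
  -- Step 1: a nonzero vector orthogonal to all exponent vectors of g
  obtain ⟨t, ht0, htperp⟩ :
      ∃ t : Fin n → ℝ, t ≠ 0 ∧ ∀ α ∈ g.support, ∑ i, (α i : ℝ) * t i = 0 := by
    set L : (Fin n → ℝ) →ₗ[ℝ] (g.support → ℝ) :=
      LinearMap.pi (fun α : g.support => ∑ i, (α.1 i : ℝ) • LinearMap.proj i) with hLdef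
    by_cases hker : LinearMap.ker L = ⊥
    · exfalso
      have hinj : Function.Injective L := LinearMap.ker_eq_bot.mp hker
      have h1 := LinearMap.finrank_le_finrank_of_injective hinj
      rw [Module.finrank_fintype_fun_eq_card, Module.finrank_fintype_fun_eq_card,
        Fintype.card_fin, Fintype.card_coe] at h1
      omega
    · obtain ⟨t, htmem, ht0⟩ := Submodule.exists_mem_ne_zero_of_ne_bot hker
      refine ⟨t, ht0, fun α hα => ?_⟩
      have hLt : L t = 0 := htmem
      have := congrFun hLt ⟨α, hα⟩
      simpa [hLdef, LinearMap.pi_apply, LinearMap.sum_apply] using this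
  obtain ⟨i₀, hi₀⟩ : ∃ i, t i ≠ 0 := by
    by_contra h; push_neg at h; exact ht0 (funext h)
  -- normalize t
  set t₁ : Fin n → ℝ := (3 / t i₀) • t with ht₁def
  set t' : Fin n → ℝ := if 0 ≤ ∑ i, t₁ i then t₁ else -t₁ with ht'def
  have ht₁i₀ : t₁ i₀ = 3 := by
    simp only [ht₁def, Pi.smul_apply, smul_eq_mul]
    field_simp
  have ht'perp : ∀ α ∈ g.support, ∑ i, (α i : ℝ) * t' i = 0 := by
    intro α hα
    have h1 : ∑ i, (α i : ℝ) * t₁ i = 0 := by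
      have : ∑ i, (α i : ℝ) * t₁ i = (3 / t i₀) * ∑ i, (α i : ℝ) * t i := by
        rw [Finset.mul_sum]
        refine Finset.sum_congr rfl fun i _ => ?_
        simp [ht₁def]; ring
      rw [this, htperp α hα, mul_zero]
    rw [ht'def]
    split_ifs with h
    · exact h1
    · simp only [Pi.neg_apply, mul_neg, ← Finset.sum_neg_distrib]
      rw [← neg_zero, ← h1]
      simp
  have ht'sum : 0 ≤ ∑ i, t' i := by
    rw [ht'def]
    split_ifs with h
    · exact h
    · push_neg at h
      simp only [Pi.neg_apply, Finset.sum_neg_distrib]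
      linarith
  have ht'i₀ : |t' i₀| = 3 := by
    rw [ht'def]
    split_ifs with h
    · rw [ht₁i₀]; norm_num
    · simp only [Pi.neg_apply, abs_neg, ht₁i₀]; norm_num
  -- constants
  set M : ℝ := ∑ α ∈ g.support, |g.coeff α| with hMdef
  have hM0 : 0 ≤ M := Finset.sum_nonneg fun α _ => abs_nonneg _
  set R : ℝ := 1 + Real.log (M + 1) with hRdef
  have hM1pos : (0:ℝ) < M + 1 := by linarith
  have hkey : M * Real.exp ((1 - R) * d) ≤ 1 := by
    have hexp : Real.exp ((1 - R) * d) = (M + 1)⁻¹ ^ d := by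
      have : (1 - R) * d = (d : ℝ) * (-Real.log (M + 1)) := by rw [hRdef]; ring
      rw [this, Real.exp_nat_mul, Real.exp_neg, Real.exp_log hM1pos]
    rw [hexp]
    have hinv1 : (M + 1)⁻¹ ≤ 1 := by
      rw [inv_le_one_iff₀]; right; linarith
    have hinv0 : 0 ≤ (M + 1)⁻¹ := inv_nonneg.mpr (le_of_lt hM1pos)
    have hpow : (M + 1)⁻¹ ^ d ≤ (M + 1)⁻¹ :=
      pow_le_of_le_one hinv0 hinv1 (by omega)
    calc M * (M + 1)⁻¹ ^ d ≤ M * (M + 1)⁻¹ := by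
          exact mul_le_mul_of_nonneg_left hpow hM0
      _ ≤ 1 := by
          rw [mul_inv_le_iff₀ hM1pos]; linarith
  -- the boxes
  set S : ℕ → Set (Fin n → ℝ) := fun k =>
    Set.pi Set.univ fun i =>
      Set.Icc (Real.exp (-R - 1 + k * t' i)) (Real.exp (-R + 1 + k * t' i)) with hSdef
  -- each box lies in the sublevel set
  have hsub : ∀ k, S k ⊆ {x : Fin n → ℝ | eval x g ≤ 1} := by
    intro k x hx
    have hxpos : ∀ i, 0 < x i := fun i =>
      lt_of_lt_of_le (Real.exp_pos _) (hx i (Set.mem_univ i)).1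
    have hlog : ∀ i, -R - 1 + k * t' i ≤ Real.log (x i) ∧
        Real.log (x i) ≤ -R + 1 + k * t' i := by
      intro i
      obtain ⟨h1, h2⟩ := hx i (Set.mem_univ i)
      exact ⟨(Real.le_log_iff_exp_le (hxpos i)).mpr h1,
        (Real.log_le_iff_le_exp (hxpos i)).mpr h2⟩
    have hterm : ∀ α ∈ g.support, ∏ i, x i ^ α i ≤ Real.exp ((1 - R) * d) := by
      intro α hα
      have hdeg : (∑ i, (α i : ℝ)) = d := by
        have hcoeff : g.coeff α ≠ 0 := MvPolynomial.mem_support_iff.mp hα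
        have hw := hg hcoeff
        have hdegnat : ∑ i, α i = d := by
          rw [show (Finsupp.weight 1 : (Fin n →₀ ℕ) →+ ℕ) = Finsupp.weight (fun _ => 1) from rfl,
            ← Finsupp.degree_eq_weight_one] at hw
          rw [← hw, Finsupp.degree_eq_sum]
        exact_mod_cast congrArg (Nat.cast : ℕ → ℝ) hdegnat
      have hprod : ∏ i, x i ^ α i = Real.exp (∑ i, (α i : ℝ) * Real.log (x i)) := by
        rw [Real.exp_sum]
        refine Finset.prod_congr rfl fun i _ => ?_
        rw [Real.exp_nat_mul, Real.exp_log (hxpos i)]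
      rw [hprod, Real.exp_le_exp]
      have hsplit : ∑ i, (α i : ℝ) * Real.log (x i)
          = (∑ i, (α i : ℝ) * (Real.log (x i) - k * t' i))
            + (k : ℝ) * ∑ i, (α i : ℝ) * t' i := by
        rw [Finset.mul_sum, ← Finset.sum_add_distrib]
        refine Finset.sum_congr rfl fun i _ => ?_
        ring
      rw [hsplit, ht'perp α hα, mul_zero, add_zero]
      calc ∑ i, (α i : ℝ) * (Real.log (x i) - k * t' i)
          ≤ ∑ i, (α i : ℝ) * (1 - R) := by
            refine Finset.sum_le_sum fun i _ => ?_
            refine mul_le_mul_of_nonneg_left ?_ (Nat.cast_nonneg _)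
            have := (hlog i).2
            linarith
        _ = (1 - R) * d := by rw [← Finset.sum_mul, hdeg]; ring
    have hprodpos : ∀ α : Fin n →₀ ℕ, 0 ≤ ∏ i, x i ^ α i := fun α =>
      Finset.prod_nonneg fun i _ => pow_nonneg (le_of_lt (hxpos i)) _
    calc eval x g = ∑ α ∈ g.support, g.coeff α * ∏ i, x i ^ α i := eval_eq' x g
      _ ≤ ∑ α ∈ g.support, |g.coeff α| * Real.exp ((1 - R) * d) := by
          refine Finset.sum_le_sum fun α hα => ?_
          calc g.coeff α * ∏ i, x i ^ α i
              ≤ |g.coeff α| * ∏ i, x i ^ α i :=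
                mul_le_mul_of_nonneg_right (le_abs_self _) (hprodpos α)
            _ ≤ |g.coeff α| * Real.exp ((1 - R) * d) :=
                mul_le_mul_of_nonneg_left (hterm α hα) (abs_nonneg _)
      _ = M * Real.exp ((1 - R) * d) := by rw [hMdef, Finset.sum_mul]
      _ ≤ 1 := hkey
  -- the boxes are pairwise disjoint
  have hdisj : Pairwise (Function.onFun Disjoint S) := by
    intro k l hkl
    rw [Function.onFun, Set.disjoint_left]
    intro x hxk hxl
    obtain ⟨hk1, hk2⟩ := hxk i₀ (Set.mem_univ _)
    obtain ⟨hl1, hl2⟩ := hxl i₀ (Set.mem_univ _)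
    have h1 : -R - 1 + k * t' i₀ ≤ -R + 1 + l * t' i₀ :=
      Real.exp_le_exp.mp (le_trans hk1 hl2)
    have h2 : -R - 1 + l * t' i₀ ≤ -R + 1 + k * t' i₀ :=
      Real.exp_le_exp.mp (le_trans hl1 hk2)
    have h3 : |((k : ℝ) - l) * t' i₀| ≤ 2 := by
      rw [abs_le, sub_mul]
      constructor <;> nlinarith
    rw [abs_mul, ht'i₀] at h3
    have h4 : (1 : ℝ) ≤ |(k : ℝ) - l| := by
      have hne : (k : ℤ) - l ≠ 0 := sub_ne_zero.mpr (by exact_mod_cast hkl)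
      have := Int.one_le_abs hne
      have hcast : |(k : ℝ) - l| = ((|(k : ℤ) - l| : ℤ) : ℝ) := by
        push_cast [abs_sub_comm]
        rw [abs_sub_comm]
      rw [hcast]
      exact_mod_cast this
    linarith
  -- each box has volume bounded below
  set c₀ : ℝ := Real.exp (-R + 1) - Real.exp (-R - 1) with hc₀def
  have hc₀pos : 0 < c₀ := by
    rw [hc₀def, sub_pos, Real.exp_lt_exp]
    linarith
  have hvol : ∀ k : ℕ, ENNReal.ofReal (c₀ ^ n) ≤ volume (S k) := by
    intro k
    rw [hSdef]
    rw [volume_pi_pi]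
    have hIcc : ∀ i, volume (Set.Icc (Real.exp (-R - 1 + k * t' i))
        (Real.exp (-R + 1 + k * t' i)))
        = ENNReal.ofReal (Real.exp (k * t' i) * c₀) := by
      intro i
      rw [Real.volume_Icc, hc₀def, mul_sub, ← Real.exp_add, ← Real.exp_add]
      ring_nf
    simp_rw [hIcc]
    rw [← ENNReal.ofReal_prod_of_nonneg
      (fun i _ => mul_nonneg (Real.exp_nonneg _) (le_of_lt hc₀pos))]
    apply ENNReal.ofReal_le_ofReal
    rw [Finset.prod_mul_distrib, Finset.prod_const, ← Real.exp_sum, ← Finset.mul_sum,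
      Finset.card_univ, Fintype.card_fin]
    have h1 : (1 : ℝ) ≤ Real.exp ((k : ℝ) * ∑ i, t' i) := by
      rw [Real.one_le_exp_iff]
      positivity
    nlinarith [pow_nonneg (le_of_lt hc₀pos) n]
  -- conclude
  have hmeas : ∀ k, MeasurableSet (S k) := fun k =>
    MeasurableSet.univ_pi fun i => measurableSet_Icc
  have hunion : volume (⋃ k, S k) = ∑' k, volume (S k) := measure_iUnion hdisj hmeas
  have htop : (∑' k : ℕ, volume (S k)) = ⊤ := by
    rw [eq_top_iff]
    calc (⊤ : ENNReal) = ∑' _ : ℕ, ENNReal.ofReal (c₀ ^ n) :=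
          (ENNReal.tsum_const_eq_top_of_ne_zero
            (ne_of_gt (ENNReal.ofReal_pos.mpr (by positivity)))).symm
      _ ≤ ∑' k, volume (S k) := ENNReal.tsum_le_tsum hvol
  rw [eq_top_iff, ← htop, ← hunion]
  exact measure_mono (Set.iUnion_subset hsub)
end

section
/- The polynomial g*(x) = Σ_{i=1}^n x_i^d (d an even positive integer) is the unique minimizer of the ℓ1-norm ‖g‖₁ = Σ_α |g_α| over all homogeneous polynomials g of degree d in n variables whose sublevel set {x : g(x) ≤ 1} has Lebesgue volume at most vol(B_d), where B_d = {x : Σ_i x_i^d ≤ 1}. -/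
open MeasureTheory MvPolynomial

private lemma aux_coeff_sum_abs (n d : ℕ) (hd0 : 0 < d) :
    ∑ α ∈ (∑ i : Fin n, (X i : MvPolynomial (Fin n) ℝ) ^ d).support,
      |coeff α (∑ i : Fin n, (X i : MvPolynomial (Fin n) ℝ) ^ d)| = (n : ℝ) := by
  classical
  set p : MvPolynomial (Fin n) ℝ := ∑ i : Fin n, (X i) ^ d with hp
  have hcoeff : ∀ i : Fin n, coeff (Finsupp.single i d) p = 1 := by
    intro i
    simp [hp, MvPolynomial.coeff_sum, MvPolynomial.X_pow_eq_monomial,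
      MvPolynomial.coeff_monomial, Finsupp.single_left_inj hd0.ne']
  have hsupp : p.support ⊆ Finset.image (fun i => Finsupp.single i d) Finset.univ := by
    refine (MvPolynomial.support_sum).trans ?_
    intro α hα
    simp only [Finset.mem_biUnion] at hα
    obtain ⟨i, -, hi⟩ := hα
    rw [MvPolynomial.X_pow_eq_monomial, MvPolynomial.support_monomial] at hi
    simp only [if_neg one_ne_zero, Finset.mem_singleton] at hi
    exact Finset.mem_image.mpr ⟨i, Finset.mem_univ i, hi.symm⟩
  rw [Finset.sum_subset hsupp (by
    intro α _ hα
    simp [MvPolynomial.notMem_support_iff.mp hα])]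
  rw [Finset.sum_image (fun i _ j _ h => (Finsupp.single_left_injective hd0.ne') h)]
  simp [hcoeff]

private lemma aux_rho_pos (n d : ℕ) (hd : Even d) (hd0 : 0 < d) :
    0 < volume {x : Fin n → ℝ | ∑ i, x i ^ d ≤ 1} := by
  set r : ℝ := 1 / (n + 1) with hr
  have hn1 : (0:ℝ) < n + 1 := by positivity
  have hr0 : 0 < r := by positivity
  have hr1 : r ≤ 1 := by rw [hr, div_le_one hn1]; linarith [Nat.cast_nonneg (α := ℝ) n]
  have hsub : Metric.ball (0 : Fin n → ℝ) r ⊆ {x : Fin n → ℝ | ∑ i, x i ^ d ≤ 1} := by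
    intro x hx
    rw [Metric.mem_ball, dist_pi_lt_iff hr0] at hx
    have hb : ∀ i, x i ^ d ≤ r := by
      intro i
      have h1 : |x i| < r := by simpa [Real.dist_eq] using hx i
      have h2 : x i ^ d = |x i| ^ d := (hd.pow_abs _).symm
      have h3 : |x i| ^ d ≤ r ^ d := pow_le_pow_left₀ (abs_nonneg _) h1.le d
      have h4 : r ^ d ≤ r := pow_le_of_le_one hr0.le hr1 hd0.ne'
      linarith
    show ∑ i, x i ^ d ≤ 1
    have hs : ∑ i, x i ^ d ≤ (n : ℝ) * r := by
      calc ∑ i, x i ^ d ≤ ∑ _i : Fin n, r := Finset.sum_le_sum fun i _ => hb i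
        _ = (n : ℝ) * r := by simp
    have hnr : (n : ℝ) * r ≤ 1 := by
      rw [hr, mul_one_div, div_le_one hn1]; linarith
    linarith
  exact lt_of_lt_of_le (Metric.measure_ball_pos volume 0 hr0) (measure_mono hsub)

private lemma aux_rho_lt_top (n d : ℕ) (hd : Even d) (hd0 : 0 < d) :
    volume {x : Fin n → ℝ | ∑ i, x i ^ d ≤ 1} < ⊤ := by
  have hsub : {x : Fin n → ℝ | ∑ i, x i ^ d ≤ 1} ⊆ Metric.closedBall 0 1 := by
    intro x hx
    rw [Metric.mem_closedBall, dist_pi_le_iff zero_le_one]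
    intro i
    have h1 : x i ^ d ≤ 1 :=
      le_trans (Finset.single_le_sum (fun j _ => hd.pow_nonneg (x j)) (Finset.mem_univ i)) hx
    have h2 : |x i| ^ d ≤ 1 ^ d := by rw [hd.pow_abs]; simpa using h1
    have := le_of_pow_le_pow_left₀ hd0.ne' zero_le_one h2
    simpa [Real.dist_eq] using this
  exact lt_of_le_of_lt (measure_mono hsub) (isCompact_closedBall _ _).measure_lt_top

private lemma aux_amgm (n d : ℕ) (hd : Even d) (hd0 : 0 < d)
    (α : Fin n →₀ ℕ) (hα : ∑ i, (α i : ℝ) = d) (x : Fin n → ℝ) :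
    |∏ i, x i ^ α i| ≤ ∑ i, ((α i : ℝ) / d) * x i ^ d := by
  have hd' : (d : ℝ) ≠ 0 := Nat.cast_ne_zero.mpr hd0.ne'
  have key : ∀ i : Fin n, |x i| ^ (α i : ℕ) = (|x i| ^ d) ^ ((α i : ℝ) / d) := by
    intro i
    rw [← Real.rpow_natCast (|x i|) d, ← Real.rpow_mul (abs_nonneg _),
      mul_div_cancel₀ _ hd', Real.rpow_natCast]
  calc |∏ i, x i ^ α i| = ∏ i, |x i| ^ (α i : ℕ) := by
        rw [Finset.abs_prod]; exact Finset.prod_congr rfl fun i _ => abs_pow _ _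
    _ = ∏ i, (|x i| ^ d) ^ ((α i : ℝ) / d) := Finset.prod_congr rfl fun i _ => key i
    _ ≤ ∑ i, ((α i : ℝ) / d) * (|x i| ^ d) := by
        refine Real.geom_mean_le_arith_mean_weighted _ _ _
          (fun i _ => by positivity) ?_ (fun i _ => by positivity)
        rw [← Finset.sum_div, hα, div_self hd']
    _ = ∑ i, ((α i : ℝ) / d) * x i ^ d := by
        exact Finset.sum_congr rfl fun i _ => by rw [hd.pow_abs]

private lemma aux_pointwise (n d : ℕ) (g : MvPolynomial (Fin n) ℝ)
    (habs : ∀ α ∈ g.support, ∀ x : Fin n → ℝ,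
      |∏ i, x i ^ α i| ≤ ∑ i, ((α i : ℝ) / d) * x i ^ d)
    (x : Fin n → ℝ) :
    eval x g ≤ ∑ i, ((∑ α ∈ g.support, |coeff α g| * α i) / d) * x i ^ d := by
  rw [MvPolynomial.eval_eq']
  calc ∑ α ∈ g.support, coeff α g * ∏ i, x i ^ α i
      ≤ ∑ α ∈ g.support, |coeff α g| * (∑ i, ((α i : ℝ) / d) * x i ^ d) := by
        refine Finset.sum_le_sum fun α hα => ?_
        calc coeff α g * ∏ i, x i ^ α i ≤ |coeff α g * ∏ i, x i ^ α i| := le_abs_self _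
          _ = |coeff α g| * |∏ i, x i ^ α i| := abs_mul _ _
          _ ≤ |coeff α g| * (∑ i, ((α i : ℝ) / d) * x i ^ d) :=
              mul_le_mul_of_nonneg_left (habs α hα x) (abs_nonneg _)
    _ = ∑ i, ((∑ α ∈ g.support, |coeff α g| * α i) / d) * x i ^ d := by
        simp_rw [Finset.mul_sum]
        rw [Finset.sum_comm]
        refine Finset.sum_congr rfl fun i _ => ?_
        rw [Finset.sum_div, Finset.sum_mul]
        refine Finset.sum_congr rfl fun α _ => ?_
        ring

private lemma aux_sum_c (n d : ℕ) (hd0 : 0 < d) (g : MvPolynomial (Fin n) ℝ)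
    (hdeg : ∀ α ∈ g.support, ∑ i, (α i : ℝ) = d) :
    ∑ i, ((∑ α ∈ g.support, |coeff α g| * α i) / d) = ∑ α ∈ g.support, |coeff α g| := by
  have hd' : (d : ℝ) ≠ 0 := Nat.cast_ne_zero.mpr hd0.ne'
  rw [← Finset.sum_div, Finset.sum_comm]
  rw [div_eq_iff hd', Finset.sum_mul]
  refine Finset.sum_congr rfl fun α hα => ?_
  rw [← Finset.mul_sum, hdeg α hα]

private lemma aux_scaling (n d : ℕ) (hd0 : 0 < d) (c : Fin n → ℝ) (hpos : ∀ i, 0 < c i)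
    (hprod : ∏ i, c i < 1)
    (hrpos : 0 < volume {x : Fin n → ℝ | ∑ i, x i ^ d ≤ 1})
    (hrtop : volume {x : Fin n → ℝ | ∑ i, x i ^ d ≤ 1} < ⊤) :
    volume {x : Fin n → ℝ | ∑ i, x i ^ d ≤ 1}
      < volume {x : Fin n → ℝ | ∑ i, c i * x i ^ d ≤ 1} := by
  classical
  set b : Fin n → ℝ := fun i => (c i) ^ ((d : ℝ)⁻¹) with hb
  have hbpos : ∀ i, 0 < b i := fun i => Real.rpow_pos_of_pos (hpos i) _
  have hbd : ∀ i, b i ^ d = c i := by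
    intro i
    rw [hb, ← Real.rpow_natCast ((c i) ^ ((d:ℝ)⁻¹)) d, ← Real.rpow_mul (hpos i).le,
      inv_mul_cancel₀ (Nat.cast_ne_zero.mpr hd0.ne' : (d:ℝ) ≠ 0), Real.rpow_one]
  set T := Matrix.toLin' (Matrix.diagonal b) with hT
  have hdet : LinearMap.det T = ∏ i, b i := by
    rw [hT, LinearMap.det_toLin', Matrix.det_diagonal]
  have hP : 0 < ∏ i, b i := Finset.prod_pos fun i _ => hbpos i
  have hdet0 : LinearMap.det T ≠ 0 := by rw [hdet]; exact hP.ne'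
  have hpre : T ⁻¹' {x : Fin n → ℝ | ∑ i, x i ^ d ≤ 1}
      = {x : Fin n → ℝ | ∑ i, c i * x i ^ d ≤ 1} := by
    ext x
    simp only [Set.mem_preimage, Set.mem_setOf_eq, hT, Matrix.toLin'_apply]
    have : ∀ i, ((Matrix.diagonal b).mulVec x) i ^ d = c i * x i ^ d := by
      intro i
      rw [Matrix.mulVec_diagonal, mul_pow, hbd]
    rw [Finset.sum_congr rfl fun i _ => this i]
  have hvol := MeasureTheory.Measure.addHaar_preimage_linearMap volume hdet0
      {x : Fin n → ℝ | ∑ i, x i ^ d ≤ 1}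
  rw [hpre] at hvol
  rw [hvol, hdet]
  have hP1 : ∏ i, b i < 1 := by
    by_contra h
    push_neg at h
    have : (1:ℝ) ≤ (∏ i, b i) ^ d := one_le_pow₀ h
    rw [← Finset.prod_pow] at this
    have := Finset.prod_congr rfl fun i (_ : i ∈ Finset.univ) => hbd i
    linarith [hprod]
  have h1 : (1:ℝ) < |(∏ i, b i)⁻¹| := by
    rw [abs_of_pos (inv_pos.mpr hP)]
    exact (one_lt_inv₀ hP).mpr hP1
  calc volume {x : Fin n → ℝ | ∑ i, x i ^ d ≤ 1}
      = 1 * volume {x : Fin n → ℝ | ∑ i, x i ^ d ≤ 1} := (one_mul _).symm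
    _ < ENNReal.ofReal |(∏ i, b i)⁻¹| * volume {x : Fin n → ℝ | ∑ i, x i ^ d ≤ 1} := by
        refine (ENNReal.mul_lt_mul_iff_left hrpos.ne' hrtop.ne).mpr ?_
        rw [← ENNReal.ofReal_one]
        exact ENNReal.ofReal_lt_ofReal_iff_of_nonneg zero_le_one |>.mpr h1

private lemma aux_cylinder (n d : ℕ) (hd : Even d) (hd0 : 0 < d) (c : Fin n → ℝ)
    (hc : ∀ i, 0 ≤ c i) (i0 : Fin n) (hci0 : c i0 = 0) :
    volume {x : Fin n → ℝ | ∑ i, c i * x i ^ d ≤ 1} = ⊤ := by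
  classical
  set S : ℝ := ∑ i, c i with hS
  have hS0 : 0 ≤ S := Finset.sum_nonneg fun i _ => hc i
  set r : ℝ := min 1 (1 / (1 + S)) with hr
  have hr0 : 0 < r := lt_min one_pos (by positivity)
  have hr1 : r ≤ 1 := min_le_left _ _
  set t : Fin n → Set ℝ := fun i => if i = i0 then Set.univ else Set.Icc (-r) r with ht
  have hsub : Set.pi Set.univ t ⊆ {x : Fin n → ℝ | ∑ i, c i * x i ^ d ≤ 1} := by
    intro x hx
    show ∑ i, c i * x i ^ d ≤ 1
    have hbound : ∀ i, c i * x i ^ d ≤ c i * r ^ d := by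
      intro i
      rcases eq_or_ne i i0 with h | h
      · rw [h, hci0]; simp
      · have hxi : x i ∈ Set.Icc (-r) r := by
          have := hx i (Set.mem_univ i)
          simp only [ht, if_neg h] at this
          exact this
        have habs : |x i| ≤ r := abs_le.mpr ⟨hxi.1, hxi.2⟩
        have : x i ^ d ≤ r ^ d := by
          rw [← hd.pow_abs]
          exact pow_le_pow_left₀ (abs_nonneg _) habs d
        exact mul_le_mul_of_nonneg_left this (hc i)
    calc ∑ i, c i * x i ^ d ≤ ∑ i, c i * r ^ d := Finset.sum_le_sum fun i _ => hbound i
      _ = S * r ^ d := by rw [← Finset.sum_mul]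
      _ ≤ S * r := mul_le_mul_of_nonneg_left (pow_le_of_le_one hr0.le hr1 hd0.ne') hS0
      _ ≤ S * (1 / (1 + S)) := mul_le_mul_of_nonneg_left (min_le_right _ _) hS0
      _ ≤ 1 := by rw [mul_one_div, div_le_one (by positivity)]; linarith
  have hvolpi : volume (Set.pi Set.univ t) = ⊤ := by
    rw [volume_pi_pi]
    rw [← Finset.mul_prod_erase Finset.univ _ (Finset.mem_univ i0)]
    have h1 : volume (t i0) = ⊤ := by rw [ht]; simp
    have h2 : ∏ i ∈ Finset.univ.erase i0, volume (t i) ≠ 0 := by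
      rw [Finset.prod_ne_zero_iff]
      intro i hi
      rw [ht]
      simp only [if_neg (Finset.mem_erase.mp hi).1]
      rw [Real.volume_Icc]
      simp only [ne_eq, ENNReal.ofReal_eq_zero, not_le]
      linarith
    rw [h1, ENNReal.top_mul h2]
  exact eq_top_iff.mpr (hvolpi ▸ measure_mono hsub)

private lemma aux_prod_lt_one (n : ℕ) (c : Fin n → ℝ) (hpos : ∀ i, 0 < c i)
    (hsum : ∑ i, c i ≤ n) (j : Fin n) (hj : c j ≠ 1) : ∏ i, c i < 1 := by
  have hlt : ∏ i, c i < ∏ i, Real.exp (c i - 1) := by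
    refine Finset.prod_lt_prod (fun i _ => hpos i)
      (fun i _ => (Real.add_one_le_exp _).trans_eq' (by ring)) ⟨j, Finset.mem_univ j, ?_⟩
    have := Real.add_one_lt_exp (x := c j - 1) (by intro h; apply hj; linarith)
    linarith
  calc ∏ i, c i < ∏ i, Real.exp (c i - 1) := hlt
    _ = Real.exp (∑ i, (c i - 1)) := by rw [Real.exp_sum]
    _ ≤ 1 := by
      have h0 : ∑ i, (c i - 1) ≤ 0 := by
        rw [Finset.sum_sub_distrib]
        simp only [Finset.sum_const, Finset.card_univ, Fintype.card_fin, nsmul_eq_mul, mul_one]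
        linarith
      calc Real.exp (∑ i, (c i - 1)) ≤ Real.exp 0 := Real.exp_le_exp.mpr h0
        _ = 1 := Real.exp_zero

private lemma aux_sandwich (n d : ℕ) (hd : Even d) (hd0 : 0 < d) (g : MvPolynomial (Fin n) ℝ)
    (hdeg : ∀ α ∈ g.support, ∑ i, α i = d)
    (hle : ∀ x : Fin n → ℝ, eval x g ≤ ∑ i, x i ^ d)
    (hvol : volume {x : Fin n → ℝ | eval x g ≤ 1}
      ≤ volume {x : Fin n → ℝ | ∑ i, x i ^ d ≤ 1})
    (hrtop : volume {x : Fin n → ℝ | ∑ i, x i ^ d ≤ 1} < ⊤) :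
    g = ∑ i : Fin n, X i ^ d := by
  classical
  have hevalsmul : ∀ (lam : ℝ) (x : Fin n → ℝ),
      eval (fun i => lam * x i) g = lam ^ d * eval x g := by
    intro lam x
    rw [MvPolynomial.eval_eq', MvPolynomial.eval_eq', Finset.mul_sum]
    refine Finset.sum_congr rfl fun α hα => ?_
    have : ∏ i, (lam * x i) ^ α i = lam ^ d * ∏ i, x i ^ α i := by
      simp_rw [mul_pow]
      rw [Finset.prod_mul_distrib, Finset.prod_pow_eq_pow_sum, hdeg α hα]
    rw [this]; ring
  set A := {x : Fin n → ℝ | eval x g ≤ 1} with hA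
  set B := {x : Fin n → ℝ | ∑ i, x i ^ d ≤ 1} with hB
  have hBA : B ⊆ A := fun x hx => le_trans (hle x) hx
  have contg : Continuous fun x : Fin n → ℝ => eval x g := MvPolynomial.continuous_eval g
  have contB : Continuous fun x : Fin n → ℝ => ∑ i, x i ^ d :=
    continuous_finset_sum _ fun i _ => (continuous_apply i).pow d
  have hBmeas : MeasurableSet B := (isClosed_le contB continuous_const).measurableSet
  have hdiff : volume (A \ B) = 0 := by
    rw [measure_diff hBA hBmeas.nullMeasurableSet hrtop.ne]
    exact tsub_eq_zero_of_le hvol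
  set W := {x : Fin n → ℝ | eval x g < 1} ∩ {x : Fin n → ℝ | 1 < ∑ i, x i ^ d} with hW
  have hWopen : IsOpen W :=
    (isOpen_lt contg continuous_const).inter (isOpen_lt continuous_const contB)
  have hWsub : W ⊆ A \ B := by
    intro x hx
    refine ⟨?_, fun hxB => ?_⟩
    · show eval x g ≤ 1
      exact le_of_lt hx.1
    have h1 : 1 < ∑ i, x i ^ d := hx.2
    have h2 : ∑ i, x i ^ d ≤ 1 := hxB
    linarith
  have hWempty : W = ∅ :=
    hWopen.eq_empty_of_measure_zero (measure_mono_null hWsub hdiff)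
  have hge : ∀ x : Fin n → ℝ, ∑ i, x i ^ d ≤ eval x g := by
    by_contra hcon
    push_neg at hcon
    obtain ⟨x₀, hx₀⟩ := hcon
    set G := ∑ i, x₀ i ^ d with hG
    set t := eval x₀ g with htdef
    have hG0 : 0 ≤ G := Finset.sum_nonneg fun i _ => hd.pow_nonneg _
    rcases eq_or_lt_of_le hG0 with hGz | hGpos
    · have hzero : ∀ i, x₀ i = 0 := by
        intro i
        have hterm := (Finset.sum_eq_zero_iff_of_nonneg
          (fun j (_ : j ∈ Finset.univ) => hd.pow_nonneg (x₀ j))).mp hGz.symm i (Finset.mem_univ i)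
        exact pow_eq_zero_iff hd0.ne' |>.mp hterm
      have hx0eq : x₀ = fun i => (0:ℝ) * x₀ i := funext fun i => by rw [hzero i]; ring
      have : t = 0 := by
        rw [htdef, hx0eq, hevalsmul 0 x₀, zero_pow hd0.ne', zero_mul]
      rw [← hGz] at hx₀
      rw [this] at hx₀
      exact absurd hx₀ (lt_irrefl 0)
    · set t' := max t 0 with ht'
      have ht'G : t' < G := max_lt hx₀ hGpos
      have ht'0 : 0 ≤ t' := le_max_right _ _
      have hGt' : 0 < G + t' := by linarith
      set s := 2 / (G + t') with hs
      have hs0 : 0 < s := by positivity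
      have hsG : 1 < s * G := by
        rw [hs, div_mul_eq_mul_div, lt_div_iff₀ hGt']
        linarith
      have hst : s * t < 1 := by
        have h1 : s * t ≤ s * t' := mul_le_mul_of_nonneg_left (le_max_left _ _) hs0.le
        have h2 : s * t' < 1 := by
          rw [hs, div_mul_eq_mul_div, div_lt_one hGt']
          linarith
        linarith
      set lam := s ^ ((d:ℝ)⁻¹) with hlam
      have hlamd : lam ^ d = s := by
        rw [hlam, ← Real.rpow_natCast (s ^ ((d:ℝ)⁻¹)) d, ← Real.rpow_mul hs0.le,
          inv_mul_cancel₀ (Nat.cast_ne_zero.mpr hd0.ne' : (d:ℝ) ≠ 0), Real.rpow_one]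
      set y : Fin n → ℝ := fun i => lam * x₀ i with hy
      have hy1 : eval y g = s * t := by rw [hy, hevalsmul, hlamd, htdef]
      have hy2 : ∑ i, y i ^ d = s * G := by
        rw [hy, hG]
        simp_rw [mul_pow]
        rw [← Finset.mul_sum, hlamd]
      have : y ∈ W := ⟨by rw [Set.mem_setOf_eq, hy1]; exact hst,
        by rw [Set.mem_setOf_eq, hy2]; exact hsG⟩
      rw [hWempty] at this
      exact this
  have heq : ∀ x : Fin n → ℝ, eval x g = eval x (∑ i : Fin n, X i ^ d) := by
    intro x
    have : eval x (∑ i : Fin n, (X i : MvPolynomial (Fin n) ℝ) ^ d) = ∑ i, x i ^ d := by simp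
    rw [this]
    exact le_antisymm (hle x) (hge x)
  exact MvPolynomial.funext heq

theorem l1_unique_minimizer_sum_pow
    (n d : ℕ) (hd : Even d) (hd0 : 0 < d) :
    (volume {x : Fin n → ℝ |
        eval x (∑ i : Fin n, (X i : MvPolynomial (Fin n) ℝ) ^ d) ≤ 1}
      ≤ volume {x : Fin n → ℝ | ∑ i, x i ^ d ≤ 1}) ∧
    (∑ α ∈ (∑ i : Fin n, (X i : MvPolynomial (Fin n) ℝ) ^ d).support,
        |coeff α (∑ i : Fin n, (X i : MvPolynomial (Fin n) ℝ) ^ d)| = (n : ℝ)) ∧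
    ∀ g : MvPolynomial (Fin n) ℝ, g.IsHomogeneous d →
      volume {x : Fin n → ℝ | eval x g ≤ 1} ≤ volume {x : Fin n → ℝ | ∑ i, x i ^ d ≤ 1} →
      g ≠ ∑ i : Fin n, (X i : MvPolynomial (Fin n) ℝ) ^ d →
      (n : ℝ) < ∑ α ∈ g.support, |coeff α g| := by
  classical
  refine ⟨?_, aux_coeff_sum_abs n d hd0, ?_⟩
  · have hset : {x : Fin n → ℝ |
        eval x (∑ i : Fin n, (X i : MvPolynomial (Fin n) ℝ) ^ d) ≤ 1}
        = {x : Fin n → ℝ | ∑ i, x i ^ d ≤ 1} := by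
      ext x; simp
    rw [hset]
  intro g hg hvol hne
  by_contra hcon
  push_neg at hcon
  -- degree facts for the support of g
  have hdegN : ∀ α ∈ g.support, ∑ i, α i = d := by
    intro α hα
    have h1 : Finsupp.weight 1 α = d := hg (MvPolynomial.mem_support_iff.mp hα)
    have h2 : ∑ i ∈ α.support, α i = d := by
      rwa [show (Finsupp.weight 1 : (Fin n →₀ ℕ) →+ ℕ) = Finsupp.weight (fun _ => 1) from rfl,
        ← Finsupp.degree_eq_weight_one, Finsupp.degree_apply] at h1
    rw [← h2]
    exact (Finset.sum_subset (Finset.subset_univ _)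
      (fun i _ hi => Finsupp.notMem_support_iff.mp hi)).symm
  have hdegR : ∀ α ∈ g.support, ∑ i, (α i : ℝ) = d := by
    intro α hα
    exact_mod_cast congrArg (Nat.cast : ℕ → ℝ) (hdegN α hα)
  set c : Fin n → ℝ := fun i => (∑ α ∈ g.support, |coeff α g| * α i) / d with hc
  have hc0 : ∀ i, 0 ≤ c i := by
    intro i
    refine div_nonneg (Finset.sum_nonneg fun α _ => ?_) (Nat.cast_nonneg d)
    exact mul_nonneg (abs_nonneg _) (Nat.cast_nonneg _)
  have hcsum : ∑ i, c i = ∑ α ∈ g.support, |coeff α g| :=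
    aux_sum_c n d hd0 g hdegR
  have hptwise : ∀ x : Fin n → ℝ, eval x g ≤ ∑ i, c i * x i ^ d :=
    aux_pointwise n d g (fun α hα x => aux_amgm n d hd hd0 α (hdegR α hα) x)
  have hCsub : {x : Fin n → ℝ | ∑ i, c i * x i ^ d ≤ 1}
      ⊆ {x : Fin n → ℝ | eval x g ≤ 1} := fun x hx => le_trans (hptwise x) hx
  have hrpos := aux_rho_pos n d hd hd0
  have hrtop := aux_rho_lt_top n d hd hd0
  by_cases h0 : ∃ i, c i = 0
  · obtain ⟨i0, hi0⟩ := h0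
    have hcyl := aux_cylinder n d hd hd0 c hc0 i0 hi0
    have : volume {x : Fin n → ℝ | eval x g ≤ 1} = ⊤ :=
      eq_top_iff.mpr (hcyl ▸ measure_mono hCsub)
    rw [this] at hvol
    exact absurd (lt_of_le_of_lt (le_trans le_top hvol) hrtop) (lt_irrefl _)
  push_neg at h0
  have hcpos : ∀ i, 0 < c i := fun i => (hc0 i).lt_of_ne (Ne.symm (h0 i))
  by_cases h1 : ∃ j, c j ≠ 1
  · obtain ⟨j, hj⟩ := h1
    have hsum : ∑ i, c i ≤ n := by rw [hcsum]; exact hcon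
    have hprod := aux_prod_lt_one n c hcpos hsum j hj
    have hstrict := aux_scaling n d hd0 c hcpos hprod hrpos hrtop
    have : volume {x : Fin n → ℝ | ∑ i, c i * x i ^ d ≤ 1}
        ≤ volume {x : Fin n → ℝ | ∑ i, x i ^ d ≤ 1} :=
      le_trans (measure_mono hCsub) hvol
    exact absurd (lt_of_lt_of_le hstrict this) (lt_irrefl _)
  push_neg at h1
  have hle : ∀ x : Fin n → ℝ, eval x g ≤ ∑ i, x i ^ d := by
    intro x
    have := hptwise x
    simpa [h1] using this
  exact hne (aux_sandwich n d hd hd0 g hdegN hle hvol hrtop)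
end

section
/- The function g ↦ vol({x : g(x) ≤ 1}), defined on the convex cone of homogeneous polynomials of even degree d whose unit sublevel set has finite volume, is strictly convex. -/
open MeasureTheory MvPolynomial
open scoped Pointwise

section aux

variable {n d : ℕ}

private lemma eval_smul_homog {g : MvPolynomial (Fin n) ℝ} (hg : g.IsHomogeneous d)
    (c : ℝ) (x : Fin n → ℝ) : eval (c • x) g = c ^ d * eval x g := by
  rw [eval_eq', eval_eq', Finset.mul_sum]
  refine Finset.sum_congr rfl fun m hm => ?_
  have h1 : Finsupp.degree m = d := by
    rw [Finsupp.degree_eq_weight_one]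
    exact hg (mem_support_iff.mp hm)
  have hdsum : ∑ i, m i = d := by
    rw [← h1, Finsupp.degree]
    exact (Finset.sum_subset (Finset.subset_univ _)
      (fun i _ hi => by simpa using Finsupp.notMem_support_iff.mp hi)).symm
  simp only [Pi.smul_apply, smul_eq_mul, mul_pow]
  rw [Finset.prod_mul_distrib, Finset.prod_pow_eq_pow_sum, hdsum]
  ring

-- scaling
private lemma volume_sublevel_scale {g : MvPolynomial (Fin n) ℝ} (hg : g.IsHomogeneous d)
    (hd0 : 0 < d) {s : ℝ} (hs : 0 < s) :
    volume {x : Fin n → ℝ | eval x g ≤ s}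
      = ENNReal.ofReal (s ^ ((n : ℝ) / d)) * volume {x : Fin n → ℝ | eval x g ≤ 1} := by
  set c : ℝ := s ^ ((1 : ℝ) / d) with hc
  have hcpos : 0 < c := Real.rpow_pos_of_pos hs _
  have hcd : c ^ d = s := by
    rw [hc, ← Real.rpow_natCast (s ^ ((1:ℝ)/d)) d, ← Real.rpow_mul hs.le]
    rw [one_div_mul_cancel (by exact_mod_cast hd0.ne' : (d:ℝ) ≠ 0), Real.rpow_one]
  have hset : {x : Fin n → ℝ | eval x g ≤ s} = c • {x : Fin n → ℝ | eval x g ≤ 1} := by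
    ext y
    rw [Set.mem_smul_set_iff_inv_smul_mem₀ hcpos.ne']
    simp only [Set.mem_setOf_eq]
    rw [eval_smul_homog hg, inv_pow, inv_mul_le_iff₀ (pow_pos hcpos d), mul_one, hcd]
  rw [hset, Measure.addHaar_smul]
  congr 1
  have hfr : Module.finrank ℝ (Fin n → ℝ) = n := by simp
  rw [abs_of_pos (pow_pos hcpos _), hfr]
  rw [hc, ← Real.rpow_natCast (s ^ ((1:ℝ)/d)) n, ← Real.rpow_mul hs.le,
    div_mul_eq_mul_div, one_mul]

end aux

section aux2

variable {n d : ℕ}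

private lemma volume_levelzero {g : MvPolynomial (Fin n) ℝ} (hg : g.IsHomogeneous d)
    (hn : 0 < n)
    (hfin : volume {x : Fin n → ℝ | eval x g ≤ 0} ≠ ⊤) :
    volume {x : Fin n → ℝ | eval x g ≤ 0} = 0 := by
  set S := {x : Fin n → ℝ | eval x g ≤ 0} with hS
  have hset : S = (2:ℝ) • S := by
    ext y
    rw [Set.mem_smul_set_iff_inv_smul_mem₀ (two_ne_zero)]
    simp only [hS, Set.mem_setOf_eq, eval_smul_homog hg]
    constructor <;> intro hy <;>
      nlinarith [pow_pos (by norm_num : (0:ℝ) < 2⁻¹) d, hy]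
  have h2 : volume S = ENNReal.ofReal (|(2:ℝ) ^ Module.finrank ℝ (Fin n → ℝ)|) * volume S := by
    conv_lhs => rw [hset]
    exact Measure.addHaar_smul volume 2 S
  by_contra h0
  have hvr : 0 < (volume S).toReal := ENNReal.toReal_pos h0 hfin
  have h3 := congrArg ENNReal.toReal h2
  rw [ENNReal.toReal_mul, ENNReal.toReal_ofReal (abs_nonneg _)] at h3
  have habs : |(2:ℝ) ^ Module.finrank ℝ (Fin n → ℝ)| = 1 := by nlinarith
  rw [abs_of_pos (by positivity)] at habs
  have hfr : Module.finrank ℝ (Fin n → ℝ) = n := by simp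
  rw [hfr] at habs
  have h4 : (2:ℝ) ≤ 2 ^ n := le_self_pow₀ one_le_two hn.ne'
  linarith

private noncomputable def CC (n d : ℕ) : ENNReal :=
  ∫⁻ t in Set.Ioo (0:ℝ) 1, ENNReal.ofReal ((-Real.log t) ^ ((n : ℝ) / (d : ℝ)))

private lemma CC_meas :
    Measurable fun t : ℝ => ENNReal.ofReal ((-Real.log t) ^ ((n : ℝ) / (d : ℝ))) :=
  ENNReal.measurable_ofReal.comp (((Real.continuous_rpow_const (by positivity)).measurable).comp Real.measurable_log.neg)

private lemma lintegral_exp_eq {g : MvPolynomial (Fin n) ℝ} (hg : g.IsHomogeneous d)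
    (hd0 : 0 < d) (h0 : volume {x : Fin n → ℝ | eval x g ≤ 0} = 0) :
    ∫⁻ x : Fin n → ℝ, ENNReal.ofReal (Real.exp (-(eval x g)))
      = CC n d * volume {x : Fin n → ℝ | eval x g ≤ 1} := by
  have hcont : Continuous fun x : Fin n → ℝ => eval x g := MvPolynomial.continuous_eval g
  rw [lintegral_eq_lintegral_meas_le (f := fun x => Real.exp (-(eval x g))) volume
      (Filter.Eventually.of_forall fun x => (Real.exp_pos _).le)
      ((Real.continuous_exp.comp hcont.neg).aemeasurable)]
  rw [← Set.Ioo_union_Ici_eq_Ioi (zero_lt_one : (0:ℝ) < 1)]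
  have hdisj : Disjoint (Set.Ioo (0:ℝ) 1) (Set.Ici 1) :=
    Set.disjoint_left.mpr fun a ha hb => absurd hb (not_le.mpr ha.2)
  rw [lintegral_union measurableSet_Ici hdisj]
  have h2 : ∫⁻ t in Set.Ici (1:ℝ), volume {x : Fin n → ℝ | t ≤ Real.exp (-(eval x g))} = 0 := by
    have hz : ∀ t ∈ Set.Ici (1:ℝ),
        volume {x : Fin n → ℝ | t ≤ Real.exp (-(eval x g))} = 0 := by
      intro t ht
      refine measure_mono_null (fun x hx => ?_) h0
      simp only [Set.mem_setOf_eq] at hx ⊢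
      have h1 : (1:ℝ) ≤ Real.exp (-(eval x g)) := le_trans ht hx
      rw [← Real.exp_zero] at h1
      have := Real.exp_le_exp.mp h1
      linarith
    rw [setLIntegral_congr_fun measurableSet_Ici hz]
    simp
  have key : ∀ t ∈ Set.Ioo (0:ℝ) 1,
      volume {x : Fin n → ℝ | t ≤ Real.exp (-(eval x g))}
        = ENNReal.ofReal ((-Real.log t) ^ ((n : ℝ) / (d : ℝ)))
            * volume {x : Fin n → ℝ | eval x g ≤ 1} := by
    intro t ht
    have hset : {x : Fin n → ℝ | t ≤ Real.exp (-(eval x g))}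
        = {x : Fin n → ℝ | eval x g ≤ -Real.log t} := by
      ext x
      simp only [Set.mem_setOf_eq]
      rw [← Real.log_le_iff_le_exp ht.1]
      exact le_neg
    rw [hset]
    exact volume_sublevel_scale hg hd0 (by have := Real.log_neg ht.1 ht.2; linarith)
  rw [setLIntegral_congr_fun measurableSet_Ioo key, h2, add_zero]
  rw [lintegral_mul_const _ CC_meas]
  rfl

private lemma CC_pos : 0 < CC n d := by
  rw [CC]
  refine (lintegral_pos_iff_support CC_meas).mpr ?_
  have hsub : Set.Ioo (0:ℝ) 1 ⊆
      Function.support fun t : ℝ => ENNReal.ofReal ((-Real.log t) ^ ((n : ℝ) / (d : ℝ))) := by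
    intro t ht
    simp only [Function.mem_support, ne_eq, ENNReal.ofReal_eq_zero, not_le]
    exact Real.rpow_pos_of_pos (by have := Real.log_neg ht.1 ht.2; linarith) _
  rw [Measure.restrict_apply' measurableSet_Ioo]
  rw [Set.inter_eq_self_of_subset_right hsub]
  simp [Real.volume_Ioo]

private lemma CC_lt_top (hd0 : 0 < d) : CC n d < ⊤ := by
  set a : ℝ := (n : ℝ) / (d : ℝ) with ha'
  have ha : 0 ≤ a := by positivity
  have himg : (fun u : ℝ => Real.exp (-u)) '' Set.Ioi 0 = Set.Ioo 0 1 := by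
    ext y
    constructor
    · rintro ⟨u, hu, rfl⟩
      refine ⟨Real.exp_pos _, ?_⟩
      rw [← Real.exp_zero]
      exact Real.exp_lt_exp.mpr (by simpa using hu)
    · intro hy
      refine ⟨-Real.log y, ?_, by
        show Real.exp (-(-Real.log y)) = y
        rw [neg_neg, Real.exp_log hy.1]⟩
      simp only [Set.mem_Ioi]
      have := Real.log_neg hy.1 hy.2
      linarith
  have hderiv : ∀ u ∈ Set.Ioi (0:ℝ),
      HasDerivWithinAt (fun u : ℝ => Real.exp (-u)) (-Real.exp (-u)) (Set.Ioi 0) u := by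
    intro u _
    have : HasDerivAt (fun u : ℝ => Real.exp (-u)) (-Real.exp (-u)) u := by
      simpa using (hasDerivAt_neg u).exp
    exact this.hasDerivWithinAt
  have hinj : Set.InjOn (fun u : ℝ => Real.exp (-u)) (Set.Ioi 0) :=
    (Real.exp_injective.comp neg_injective).injOn
  have hint : IntegrableOn (fun t : ℝ => (-Real.log t) ^ a) (Set.Ioo (0:ℝ) 1) := by
    rw [← himg, integrableOn_image_iff_integrableOn_abs_deriv_smul measurableSet_Ioi hderiv hinj]
    refine (Real.GammaIntegral_convergent (show (0:ℝ) < a + 1 by linarith)).congr_fun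
      (fun u hu => ?_) measurableSet_Ioi
    simp only [smul_eq_mul, abs_neg, abs_of_pos (Real.exp_pos _), Real.log_exp, neg_neg,
      add_sub_cancel_right]
  calc CC n d ≤ ∫⁻ t in Set.Ioo (0:ℝ) 1, (‖(-Real.log t) ^ a‖₊ : ENNReal) :=
        lintegral_mono fun t => Real.ofReal_le_enorm _
    _ < ⊤ := hint.2

end aux2

theorem volume_sublevel_strictly_convex
    (n d : ℕ) (hd : Even d) (hd0 : 2 ≤ d)
    (g h : MvPolynomial (Fin n) ℝ)
    (hg : g.IsHomogeneous d) (hh : h.IsHomogeneous d)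
    (hgv : volume {x : Fin n → ℝ | eval x g ≤ 1} ≠ ⊤)
    (hhv : volume {x : Fin n → ℝ | eval x h ≤ 1} ≠ ⊤)
    (hne : g ≠ h) (t : ℝ) (ht0 : 0 < t) (ht1 : t < 1) :
    volume {x : Fin n → ℝ | eval x (t • g + (1 - t) • h) ≤ 1}
      < ENNReal.ofReal t * volume {x : Fin n → ℝ | eval x g ≤ 1}
        + ENNReal.ofReal (1 - t) * volume {x : Fin n → ℝ | eval x h ≤ 1} := by
  rcases Nat.eq_zero_or_pos n with hn0 | hn
  · exfalso
    apply hne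
    subst hn0
    have hzero : ∀ p : MvPolynomial (Fin 0) ℝ, p.IsHomogeneous d → p = 0 := by
      intro p hp
      ext m
      have hm0 : m = 0 := Subsingleton.elim m 0
      have hdeg : Finsupp.degree m = 0 := by rw [hm0]; simp [Finsupp.degree]
      rw [coeff_zero]
      exact hp.coeff_eq_zero (by omega)
    rw [hzero g hg, hzero h hh]
  · set f := t • g + (1 - t) • h with hf
    have hdpos : 0 < d := by omega
    have hfhom : f.IsHomogeneous d := by
      rw [← mem_homogeneousSubmodule] at hg hh ⊢
      exact Submodule.add_mem _ (Submodule.smul_mem _ t hg) (Submodule.smul_mem _ _ hh)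
    have hevalf : ∀ x : Fin n → ℝ, eval x f = t * eval x g + (1 - t) * eval x h := by
      intro x
      simp [hf, smul_eval]
    have hcg : Continuous fun x : Fin n → ℝ => eval x g := MvPolynomial.continuous_eval g
    have hch : Continuous fun x : Fin n → ℝ => eval x h := MvPolynomial.continuous_eval h
    have hcf : Continuous fun x : Fin n → ℝ => eval x f := MvPolynomial.continuous_eval f
    set Lg := ∫⁻ x : Fin n → ℝ, ENNReal.ofReal (Real.exp (-(eval x g))) with hLg
    set Lh := ∫⁻ x : Fin n → ℝ, ENNReal.ofReal (Real.exp (-(eval x h))) with hLh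
    set Lf := ∫⁻ x : Fin n → ℝ, ENNReal.ofReal (Real.exp (-(eval x f))) with hLf
    have hsub0 : ∀ q : MvPolynomial (Fin n) ℝ,
        {x : Fin n → ℝ | eval x q ≤ 0} ⊆ {x : Fin n → ℝ | eval x q ≤ 1} := by
      intro q x hx
      exact le_trans hx (by norm_num : (0:ℝ) ≤ 1)
    have h0g : volume {x : Fin n → ℝ | eval x g ≤ 0} = 0 :=
      volume_levelzero hg hn (ne_top_of_le_ne_top hgv (measure_mono (hsub0 g)))
    have h0h : volume {x : Fin n → ℝ | eval x h ≤ 0} = 0 :=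
      volume_levelzero hh hn (ne_top_of_le_ne_top hhv (measure_mono (hsub0 h)))
    have hLgeq : Lg = CC n d * volume {x : Fin n → ℝ | eval x g ≤ 1} :=
      lintegral_exp_eq hg hdpos h0g
    have hLheq : Lh = CC n d * volume {x : Fin n → ℝ | eval x h ≤ 1} :=
      lintegral_exp_eq hh hdpos h0h
    have hLgfin : Lg ≠ ⊤ := by
      rw [hLgeq]
      exact (ENNReal.mul_lt_top (CC_lt_top hdpos) (lt_top_iff_ne_top.mpr hgv)).ne
    have hLhfin : Lh ≠ ⊤ := by
      rw [hLheq]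
      exact (ENNReal.mul_lt_top (CC_lt_top hdpos) (lt_top_iff_ne_top.mpr hhv)).ne
    have hcal : ∀ x : Fin n → ℝ,
        -(eval x f) = t * (-(eval x g)) + (1 - t) * (-(eval x h)) := by
      intro x; rw [hevalf x]; ring
    -- pointwise convexity
    have hconv : ∀ x : Fin n → ℝ,
        ENNReal.ofReal (Real.exp (-(eval x f)))
          ≤ ENNReal.ofReal t * ENNReal.ofReal (Real.exp (-(eval x g)))
            + ENNReal.ofReal (1 - t) * ENNReal.ofReal (Real.exp (-(eval x h))) := by
      intro x
      rw [← ENNReal.ofReal_mul ht0.le, ← ENNReal.ofReal_mul (by linarith),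
        ← ENNReal.ofReal_add (mul_nonneg ht0.le (Real.exp_pos _).le)
          (mul_nonneg (by linarith) (Real.exp_pos _).le)]
      apply ENNReal.ofReal_le_ofReal
      rw [hcal x]
      simpa [smul_eq_mul] using
        convexOn_exp.2 (Set.mem_univ (-(eval x g))) (Set.mem_univ (-(eval x h)))
          ht0.le (by linarith : (0:ℝ) ≤ 1 - t) (by ring)
    have hmg : Measurable fun x : Fin n → ℝ => ENNReal.ofReal (Real.exp (-(eval x g))) :=
      hcg.measurable.neg.exp.ennreal_ofReal
    have hmh : Measurable fun x : Fin n → ℝ => ENNReal.ofReal (Real.exp (-(eval x h))) :=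
      hch.measurable.neg.exp.ennreal_ofReal
    have hmeasG : Measurable fun x : Fin n → ℝ =>
        ENNReal.ofReal t * ENNReal.ofReal (Real.exp (-(eval x g)))
          + ENNReal.ofReal (1 - t) * ENNReal.ofReal (Real.exp (-(eval x h))) :=
      (hmg.const_mul _).add (hmh.const_mul _)
    have hRHSval : ∫⁻ x : Fin n → ℝ,
        (ENNReal.ofReal t * ENNReal.ofReal (Real.exp (-(eval x g)))
          + ENNReal.ofReal (1 - t) * ENNReal.ofReal (Real.exp (-(eval x h))))
        = ENNReal.ofReal t * Lg + ENNReal.ofReal (1 - t) * Lh := by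
      rw [lintegral_add_left (hmg.const_mul _), lintegral_const_mul _ hmg,
        lintegral_const_mul _ hmh]
    have hRHSfin : ENNReal.ofReal t * Lg + ENNReal.ofReal (1 - t) * Lh ≠ ⊤ := by
      exact (ENNReal.add_lt_top.mpr ⟨ENNReal.mul_lt_top ENNReal.ofReal_lt_top
        (lt_top_iff_ne_top.mpr hLgfin), ENNReal.mul_lt_top ENNReal.ofReal_lt_top
        (lt_top_iff_ne_top.mpr hLhfin)⟩).ne
    have hLffin : Lf ≠ ⊤ := by
      refine ne_top_of_le_ne_top hRHSfin ?_
      rw [← hRHSval]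
      exact lintegral_mono hconv
    -- frequently different
    have hfreq : ∃ᵐ x ∂(volume : Measure (Fin n → ℝ)), eval x g ≠ eval x h := by
      by_contra hcon
      rw [Filter.not_frequently] at hcon
      simp only [not_not] at hcon
      apply hne
      apply MvPolynomial.funext
      intro x
      have heq : (fun x : Fin n → ℝ => eval x g) = fun x => eval x h :=
        (Continuous.ae_eq_iff_eq volume hcg hch).mp hcon
      exact congrFun heq x
    have hstrict : Lf < ENNReal.ofReal t * Lg + ENNReal.ofReal (1 - t) * Lh := by
      rw [← hRHSval]
      refine lintegral_strict_mono_of_ae_le_of_frequently_ae_lt hmeasG.aemeasurable hLffin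
        (Filter.Eventually.of_forall hconv) ?_
      refine hfreq.mono fun x hx => ?_
      refine ne_of_lt ?_
      rw [← ENNReal.ofReal_mul ht0.le, ← ENNReal.ofReal_mul (by linarith),
        ← ENNReal.ofReal_add (mul_nonneg ht0.le (Real.exp_pos _).le)
          (mul_nonneg (by linarith) (Real.exp_pos _).le)]
      refine (ENNReal.ofReal_lt_ofReal_iff (by
        have e1 := Real.exp_pos (-(eval x g)); have e2 := Real.exp_pos (-(eval x h))
        nlinarith)).mpr ?_
      rw [hcal x]
      have hxy : -(eval x g) ≠ -(eval x h) := fun hc => hx (by linarith [neg_injective hc])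
      simpa [smul_eq_mul] using
        strictConvexOn_exp.2 (Set.mem_univ (-(eval x g))) (Set.mem_univ (-(eval x h)))
          hxy ht0 (by linarith : (0:ℝ) < 1 - t) (by ring)
    -- finiteness of zero sublevel of f
    have hVf0 : volume {x : Fin n → ℝ | eval x f ≤ 0} = 0 := by
      refine volume_levelzero hfhom hn ?_
      have hle : volume {x : Fin n → ℝ | eval x f ≤ 0} ≤ Lf := by
        calc volume {x : Fin n → ℝ | eval x f ≤ 0}
            = ∫⁻ _ in {x : Fin n → ℝ | eval x f ≤ 0}, 1 := (setLIntegral_one _).symm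
          _ ≤ ∫⁻ x in {x : Fin n → ℝ | eval x f ≤ 0},
                ENNReal.ofReal (Real.exp (-(eval x f))) := by
              refine setLIntegral_mono' (measurableSet_le hcf.measurable measurable_const) ?_
              intro x hx
              simp only [Set.mem_setOf_eq] at hx
              exact ENNReal.one_le_ofReal.mpr (Real.one_le_exp (by linarith))
          _ ≤ Lf := setLIntegral_le_lintegral _ _
      exact ne_top_of_le_ne_top hLffin hle
    have hLfeq : Lf = CC n d * volume {x : Fin n → ℝ | eval x f ≤ 1} :=
      lintegral_exp_eq hfhom hdpos hVf0
    have hfinal : CC n d * volume {x : Fin n → ℝ | eval x f ≤ 1}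
        < CC n d * (ENNReal.ofReal t * volume {x : Fin n → ℝ | eval x g ≤ 1}
            + ENNReal.ofReal (1 - t) * volume {x : Fin n → ℝ | eval x h ≤ 1}) := by
      calc CC n d * volume {x : Fin n → ℝ | eval x f ≤ 1} = Lf := hLfeq.symm
        _ < ENNReal.ofReal t * Lg + ENNReal.ofReal (1 - t) * Lh := hstrict
        _ = CC n d * (ENNReal.ofReal t * volume {x : Fin n → ℝ | eval x g ≤ 1}
            + ENNReal.ofReal (1 - t) * volume {x : Fin n → ℝ | eval x h ≤ 1}) := by
          rw [hLgeq, hLheq]; ring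
    exact (ENNReal.mul_lt_mul_iff_right (CC_pos.ne') (CC_lt_top hdpos).ne).mp hfinal
end

section
/- For even d ≥ 4 and n ≥ 2, the matrix I − (n+d) · M / vol(B_d) is not positive semidefinite, where M is the moment matrix with entries M(α,β) = ∫_{B_d} x^{α+β} dx indexed by multi-indices α, β of degree d/2 and B_d = {x : Σ_i x_i^d ≤ 1}. -/
open MeasureTheory Set Pointwise

namespace MomentAux

variable {n d : ℕ}

def B (n d : ℕ) : Set (Fin n → ℝ) := {x | ∑ i, x i ^ d ≤ 1}

lemma isClosed_B : IsClosed (B n d) :=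
  isClosed_le (by fun_prop) continuous_const

lemma isCompact_B (hd : Even d) (hd0 : d ≠ 0) : IsCompact (B n d) := by
  refine (Metric.isCompact_of_isClosed_isBounded isClosed_B ?_)
  rw [Metric.isBounded_iff_subset_closedBall 0]
  refine ⟨1, fun x hx => ?_⟩
  rw [Metric.mem_closedBall, dist_pi_le_iff zero_le_one]
  intro i
  simp only [Pi.zero_apply, Real.dist_eq, sub_zero]
  have h1 : x i ^ d ≤ 1 := le_trans (Finset.single_le_sum
    (f := fun j => x j ^ d) (fun j _ => hd.pow_nonneg _) (Finset.mem_univ i)) hx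
  have h2 : |x i| ^ d ≤ 1 := by rwa [← abs_pow, abs_of_nonneg (hd.pow_nonneg _)]
  exact (pow_le_one_iff_of_nonneg (abs_nonneg _) hd0).mp h2

lemma volume_B_pos (hn0 : n ≠ 0) (hd0 : d ≠ 0) : 0 < volume (B n d) := by
  have hr : (0:ℝ) < 1 / n := by positivity
  refine lt_of_lt_of_le (Metric.measure_ball_pos volume 0 hr) (measure_mono ?_)
  intro x hx
  simp only [Metric.mem_ball] at hx
  have hxi : ∀ i, |x i| ≤ 1 / n := fun i => by
    have := dist_le_pi_dist x 0 i
    simp only [Pi.zero_apply, Real.dist_eq, sub_zero] at this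
    exact le_of_lt (lt_of_le_of_lt this (by simpa using hx))
  show ∑ i, x i ^ d ≤ 1
  calc ∑ i, x i ^ d ≤ ∑ _i : Fin n, (1/n : ℝ) ^ d := by
        refine Finset.sum_le_sum fun i _ => ?_
        calc x i ^ d ≤ |x i ^ d| := le_abs_self _
          _ = |x i| ^ d := abs_pow _ _
          _ ≤ (1/n : ℝ) ^ d := pow_le_pow_left₀ (abs_nonneg _) (hxi i) d
    _ = n * (1/n : ℝ) ^ d := by rw [Finset.sum_const]; simp [mul_comm]
    _ ≤ n * (1/n : ℝ) ^ 1 := by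
        refine mul_le_mul_of_nonneg_left (pow_le_pow_of_le_one (by positivity) ?_ ?_) (by positivity)
        · rw [div_le_one (by positivity : (0:ℝ) < n)]
          exact_mod_cast Nat.one_le_iff_ne_zero.mpr hn0
        · omega
    _ = 1 := by
        rw [pow_one]
        field_simp

lemma volume_B_ne_top (hd : Even d) (hd0 : d ≠ 0) : volume (B n d) ≠ ⊤ :=
  ((isCompact_B hd hd0).measure_lt_top).ne

lemma integrableOn_monomial (hd : Even d) (hd0 : d ≠ 0) (γ : Fin n → ℕ) :
    IntegrableOn (fun x : Fin n → ℝ => ∏ i, x i ^ γ i) (B n d) := by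
  exact (Continuous.continuousOn (by fun_prop)).integrableOn_compact (isCompact_B hd hd0)


lemma smul_B (hd0 : d ≠ 0) {t : ℝ} (ht : 0 < t) :
    {x : Fin n → ℝ | ∑ i, x i ^ d ≤ t} = (t ^ (d:ℝ)⁻¹) • (B n d) := by
  have hr : (0:ℝ) < t ^ (d:ℝ)⁻¹ := Real.rpow_pos_of_pos ht _
  have hrd : (t ^ (d:ℝ)⁻¹) ^ d = t := by
    rw [← Real.rpow_natCast (t ^ (d:ℝ)⁻¹) d, ← Real.rpow_mul ht.le]
    rw [inv_mul_cancel₀ (by exact_mod_cast hd0), Real.rpow_one]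
  ext x
  rw [Set.mem_smul_set_iff_inv_smul_mem₀ hr.ne']
  simp only [Set.mem_setOf_eq, B, Pi.smul_apply, smul_eq_mul]
  rw [← div_le_one ht]
  constructor
  · intro h
    calc ∑ i, ((t ^ (d:ℝ)⁻¹)⁻¹ * x i) ^ d
        = (∑ i, x i ^ d) / t := by
          rw [Finset.sum_div]
          refine Finset.sum_congr rfl fun i _ => ?_
          rw [mul_pow, inv_pow, hrd, div_eq_inv_mul]
      _ ≤ 1 := h
  · intro h
    have : (∑ i, x i ^ d) / t = ∑ i, ((t ^ (d:ℝ)⁻¹)⁻¹ * x i) ^ d := by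
      rw [Finset.sum_div]
      refine Finset.sum_congr rfl fun i _ => ?_
      rw [mul_pow, inv_pow, hrd, div_eq_inv_mul]
    rw [this]; exact h

lemma volume_sublevel (hd0 : d ≠ 0) {t : ℝ} (ht : 0 < t) :
    volume {x : Fin n → ℝ | ∑ i, x i ^ d ≤ t}
      = ENNReal.ofReal (t ^ ((n:ℝ)/d)) * volume (B n d) := by
  rw [smul_B hd0 ht, Measure.addHaar_smul_of_nonneg volume
    (Real.rpow_nonneg ht.le _) (B n d)]
  congr 2
  rw [Module.finrank_pi, Fintype.card_fin, ← Real.rpow_natCast (t ^ (d:ℝ)⁻¹) n,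
    ← Real.rpow_mul ht.le]
  congr 1
  field_simp


lemma integral_sum_pow (hd : Even d) (hn0 : n ≠ 0) (hd0 : d ≠ 0) :
    ∫ x in B n d, (∑ i, x i ^ d) = (volume (B n d)).toReal * n / (n + d) := by
  set Br := (volume (B n d)).toReal with hBr
  have hmB : MeasurableSet (B n d) := isClosed_B.measurableSet
  have hint : IntegrableOn (fun x : Fin n → ℝ => ∑ i, x i ^ d) (B n d) :=
    (Continuous.continuousOn (by fun_prop)).integrableOn_compact (isCompact_B hd hd0)
  have hnn : 0 ≤ᵐ[volume.restrict (B n d)] fun x : Fin n → ℝ => ∑ i, x i ^ d :=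
    Filter.Eventually.of_forall fun x => Finset.sum_nonneg fun i _ => hd.pow_nonneg _
  have key := hint.integral_eq_integral_meas_lt hnn
  set F : ℝ → ℝ := fun t =>
    ((volume.restrict (B n d)) {a : Fin n → ℝ | t < ∑ i, a i ^ d}).toReal with hF
  have hmf : ∀ t : ℝ, MeasurableSet {a : Fin n → ℝ | t < ∑ i, a i ^ d} := by
    intro t
    exact measurableSet_lt measurable_const (by fun_prop)
  have hp : (-1:ℝ) < (n:ℝ)/d := by
    have : (0:ℝ) ≤ (n:ℝ)/d := by positivity
    linarith
  have hp1 : (0:ℝ) < (n:ℝ)/d + 1 := by linarith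
  -- value on Ioc 0 1
  have hval : ∀ t ∈ Ioc (0:ℝ) 1, F t = Br * (1 - t ^ ((n:ℝ)/d)) := by
    intro t ht
    have h1 : (volume.restrict (B n d)) {a : Fin n → ℝ | t < ∑ i, a i ^ d}
        = volume (B n d \ {x : Fin n → ℝ | ∑ i, x i ^ d ≤ t}) := by
      rw [Measure.restrict_apply (hmf t)]
      congr 1
      ext x
      simp only [Set.mem_inter_iff, Set.mem_setOf_eq, Set.mem_diff, B, not_le]
      tauto
    have hsub : {x : Fin n → ℝ | ∑ i, x i ^ d ≤ t} ⊆ B n d :=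
      fun x hx => le_trans hx ht.2
    have h2 : volume (B n d \ {x : Fin n → ℝ | ∑ i, x i ^ d ≤ t})
        = volume (B n d) - ENNReal.ofReal (t ^ ((n:ℝ)/d)) * volume (B n d) := by
      rw [measure_diff hsub (measurableSet_le (by fun_prop) measurable_const).nullMeasurableSet
        (ne_top_of_le_ne_top (volume_B_ne_top hd hd0) (measure_mono hsub)),
        volume_sublevel hd0 ht.1]
    rw [hF]
    simp only [h1, h2]
    have hle : ENNReal.ofReal (t ^ ((n:ℝ)/d)) * volume (B n d) ≤ volume (B n d) := by
      refine mul_le_of_le_one_left zero_le ?_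
      rw [ENNReal.ofReal_le_one]
      exact Real.rpow_le_one ht.1.le ht.2 (by positivity)
    rw [ENNReal.toReal_sub_of_le hle (volume_B_ne_top hd hd0),
      ENNReal.toReal_mul, ENNReal.toReal_ofReal (Real.rpow_nonneg ht.1.le _)]
    ring
  have hzero : ∀ t ∈ Ioi (1:ℝ), F t = 0 := by
    intro t ht
    have : {a : Fin n → ℝ | t < ∑ i, a i ^ d} ∩ B n d = ∅ := by
      ext x
      simp only [Set.mem_inter_iff, Set.mem_setOf_eq, Set.mem_empty_iff_false, iff_false, B]
      rintro ⟨h1, h2⟩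
      exact absurd (lt_of_lt_of_le (ht.trans h1) h2) (lt_irrefl _)
    rw [hF]
    simp only [Measure.restrict_apply (hmf t), this, measure_empty, ENNReal.toReal_zero]
  -- split the integral
  have hIocInt : IntegrableOn F (Ioc 0 1) := by
    refine (integrableOn_congr_fun (fun t ht => (hval t ht)) measurableSet_Ioc).mpr ?_
    have : IntervalIntegrable (fun t : ℝ => Br * (1 - t ^ ((n:ℝ)/d))) volume 0 1 := by
      apply IntervalIntegrable.const_mul
      exact IntervalIntegrable.sub intervalIntegrable_const
        (intervalIntegral.intervalIntegrable_rpow' hp)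
    exact (intervalIntegrable_iff_integrableOn_Ioc_of_le zero_le_one).mp this
  have hsplit : ∫ t in Ioi (0:ℝ), F t
      = (∫ t in Ioc (0:ℝ) 1, F t) + ∫ t in Ioi (1:ℝ), F t := by
    rw [← setIntegral_union (Set.Ioc_disjoint_Ioi le_rfl) measurableSet_Ioi hIocInt ?_]
    · rw [Set.Ioc_union_Ioi_eq_Ioi zero_le_one]
    · refine (integrableOn_congr_fun (fun t ht => hzero t ht) measurableSet_Ioi).mpr ?_
      exact integrableOn_zero
  have hIoi1 : ∫ t in Ioi (1:ℝ), F t = 0 := by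
    rw [setIntegral_congr_fun measurableSet_Ioi hzero]
    simp
  have hIoc : ∫ t in Ioc (0:ℝ) 1, F t = Br * ((n:ℝ) / (n + d)) := by
    rw [setIntegral_congr_fun measurableSet_Ioc hval,
      ← intervalIntegral.integral_of_le zero_le_one]
    rw [intervalIntegral.integral_const_mul]
    rw [intervalIntegral.integral_sub intervalIntegrable_const
      (intervalIntegral.intervalIntegrable_rpow' hp)]
    rw [intervalIntegral.integral_const, integral_rpow (Or.inl hp)]
    rw [Real.one_rpow, Real.zero_rpow (by positivity)]
    have hdpos : (0:ℝ) < d := by exact_mod_cast Nat.pos_of_ne_zero hd0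
    have hnd : (0:ℝ) < (n:ℝ) + d := by positivity
    have : (n:ℝ)/d + 1 = ((n:ℝ)+d)/d := by field_simp
    rw [this]
    field_simp
    simp only [smul_eq_mul, sub_zero, mul_one, one_mul]; ring
  rw [key]; change ∫ t in Ioi (0:ℝ), F t = _; rw [hsplit, hIoi1, hIoc, add_zero, hBr]
  ring


lemma integral_coord_pow [NeZero n] (hd : Even d) (hd0 : d ≠ 0) (i : Fin n) :
    ∫ x in B n d, x i ^ d = ∫ x in B n d, x 0 ^ d := by
  set e : Fin n ≃ Fin n := Equiv.swap 0 i with he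
  have hmp : MeasurePreserving (MeasurableEquiv.piCongrLeft (fun _ : Fin n => ℝ) e)
      volume volume := volume_measurePreserving_piCongrLeft _ e
  have hemb : MeasurableEmbedding (MeasurableEquiv.piCongrLeft (fun _ : Fin n => ℝ) e) :=
    (MeasurableEquiv.piCongrLeft (fun _ : Fin n => ℝ) e).measurableEmbedding
  have happ : ∀ (x : Fin n → ℝ) (j : Fin n),
      (MeasurableEquiv.piCongrLeft (fun _ : Fin n => ℝ) e) x j = x (e.symm j) := by
    intro x j
    simp [MeasurableEquiv.piCongrLeft, Equiv.piCongrLeft, Equiv.piCongrLeft']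
  have hpre : (MeasurableEquiv.piCongrLeft (fun _ : Fin n => ℝ) e) ⁻¹' (B n d) = B n d := by
    ext x
    simp only [Set.mem_preimage, B, Set.mem_setOf_eq]
    have hs : ∑ j, ((MeasurableEquiv.piCongrLeft (fun _ : Fin n => ℝ) e) x) j ^ d
        = ∑ j, x j ^ d := by
      rw [Finset.sum_congr rfl fun j _ => by rw [happ]]
      exact Equiv.sum_comp e.symm (fun j => x j ^ d)
    rw [hs]
  have := hmp.setIntegral_preimage_emb hemb (fun x : Fin n → ℝ => x 0 ^ d) (B n d)
  rw [hpre] at this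
  rw [← this]
  refine setIntegral_congr_fun isClosed_B.measurableSet fun x _ => ?_
  rw [happ]
  simp [he, Equiv.swap_apply_left]

lemma integral_pure_moment [NeZero n] (hd : Even d) (hn0 : n ≠ 0) (hd0 : d ≠ 0) :
    ∫ x in B n d, x 0 ^ d = (volume (B n d)).toReal / (n + d) := by
  have hint : ∀ i : Fin n, IntegrableOn (fun x : Fin n → ℝ => x i ^ d) (B n d) :=
    fun i => (Continuous.continuousOn (by fun_prop)).integrableOn_compact (isCompact_B hd hd0)
  have hsum : ∫ x in B n d, (∑ i, x i ^ d)
      = ∑ i : Fin n, ∫ x in B n d, x i ^ d :=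
    integral_finset_sum _ fun i _ => hint i
  have hsame : ∑ i : Fin n, ∫ x in B n d, x i ^ d
      = n * ∫ x in B n d, x 0 ^ d := by
    rw [Finset.sum_congr rfl fun i _ => integral_coord_pow hd hd0 i]
    simp [mul_comm]
  have := integral_sum_pow hd hn0 hd0
  rw [hsum, hsame] at this
  have hnpos : (0:ℝ) < n := by exact_mod_cast Nat.pos_of_ne_zero hn0
  have hnd : (0:ℝ) < (n:ℝ) + d := by positivity
  have hV := (volume (B n d)).toReal
  have h2 : (n:ℝ) * (∫ x in B n d, x 0 ^ d)
      = (n:ℝ) * ((volume (B n d)).toReal / (n + d)) := by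
    rw [this]; field_simp
  exact mul_left_cancel₀ hnpos.ne' h2


lemma ball_subset_B (hn0 : n ≠ 0) (hd0 : d ≠ 0) :
    Metric.ball (0 : Fin n → ℝ) (1/n) ⊆ B n d := by
  intro x hx
  simp only [Metric.mem_ball] at hx
  have hxi : ∀ i, |x i| ≤ 1 / n := fun i => by
    have := dist_le_pi_dist x 0 i
    simp only [Pi.zero_apply, Real.dist_eq, sub_zero] at this
    exact le_of_lt (lt_of_le_of_lt this (by simpa using hx))
  show ∑ i, x i ^ d ≤ 1
  calc ∑ i, x i ^ d ≤ ∑ _i : Fin n, (1/n : ℝ) ^ d := by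
        refine Finset.sum_le_sum fun i _ => ?_
        calc x i ^ d ≤ |x i ^ d| := le_abs_self _
          _ = |x i| ^ d := abs_pow _ _
          _ ≤ (1/n : ℝ) ^ d := pow_le_pow_left₀ (abs_nonneg _) (hxi i) d
    _ = n * (1/n : ℝ) ^ d := by rw [Finset.sum_const]; simp [mul_comm]
    _ ≤ n * (1/n : ℝ) ^ 1 := by
        refine mul_le_mul_of_nonneg_left (pow_le_pow_of_le_one (by positivity) ?_ ?_) (by positivity)
        · rw [div_le_one (by positivity : (0:ℝ) < n)]
          exact_mod_cast Nat.one_le_iff_ne_zero.mpr hn0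
        · omega
    _ = 1 := by
        rw [pow_one]
        field_simp

lemma integral_mixed_pos [NeZero n] (hd : Even d) (hn0 : n ≠ 0) (hd0 : d ≠ 0) :
    0 < ∫ x in B n d, x 0 ^ (d - 2) * x 1 ^ 2 := by
  have hd2 : Even (d - 2) := by rcases hd with ⟨m, hm⟩; exact ⟨m - 1, by omega⟩
  have hnn : 0 ≤ᵐ[volume.restrict (B n d)]
      fun x : Fin n → ℝ => x 0 ^ (d - 2) * x 1 ^ 2 :=
    Filter.Eventually.of_forall fun x => mul_nonneg (hd2.pow_nonneg _) (sq_nonneg _)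
  have hfi : IntegrableOn (fun x : Fin n → ℝ => x 0 ^ (d - 2) * x 1 ^ 2) (B n d) :=
    (Continuous.continuousOn (by fun_prop)).integrableOn_compact (isCompact_B hd hd0)
  rw [setIntegral_pos_iff_support_of_nonneg_ae hnn hfi]
  have hsub : Metric.ball (0 : Fin n → ℝ) (1/n)
      \ ({x : Fin n → ℝ | x 0 = 0} ∪ {x : Fin n → ℝ | x 1 = 0})
      ⊆ Function.support (fun x : Fin n → ℝ => x 0 ^ (d - 2) * x 1 ^ 2) ∩ B n d := by
    rintro x ⟨hxb, hxh⟩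
    simp only [Set.mem_union, Set.mem_setOf_eq, not_or] at hxh
    refine ⟨?_, ball_subset_B hn0 hd0 hxb⟩
    simp only [Function.mem_support]
    exact mul_ne_zero (pow_ne_zero _ hxh.1) (pow_ne_zero _ hxh.2)
  refine lt_of_lt_of_le ?_ (measure_mono hsub)
  rw [measure_diff_null ?_]
  · exact Metric.measure_ball_pos volume 0 (by positivity)
  · exact measure_union_null (Measure.pi_hyperplane _ 0 0) (Measure.pi_hyperplane _ 1 0)

end MomentAux

open MomentAux in
theorem identity_sub_moment_matrix_not_psd
    (n d : ℕ) (hd : Even d) (hd4 : 4 ≤ d) (hn : 2 ≤ n) :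
    ¬ Matrix.PosSemidef
        ((1 : Matrix (Finset.Nat.antidiagonalTuple n (d / 2))
            (Finset.Nat.antidiagonalTuple n (d / 2)) ℝ)
          - ((n + d : ℝ) / (volume {x : Fin n → ℝ | ∑ i, x i ^ d ≤ 1}).toReal) •
            Matrix.of (fun α β :
                Finset.Nat.antidiagonalTuple n (d / 2) =>
              ∫ x in {x : Fin n → ℝ | ∑ i, x i ^ d ≤ 1},
                ∏ i, x i ^ ((α : Fin n → ℕ) i + (β : Fin n → ℕ) i))) := by
  intro h
  haveI : NeZero n := ⟨by omega⟩
  have hn0 : n ≠ 0 := by omega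
  have hd0 : d ≠ 0 := by omega
  obtain ⟨m, hm⟩ := hd
  have hd' : Even d := ⟨m, hm⟩
  set k := d / 2 with hk
  have hk2 : 2 ≤ k := by omega
  have h2k : k + k = d := by omega
  have h01 : (0 : Fin n) ≠ 1 := by
    intro hc
    have h9 := congrArg Fin.val hc
    simp [Fin.val_one' n] at h9
    omega
  set α0 : Fin n → ℕ := fun i => if i = 0 then k else 0 with hα0
  set β0 : Fin n → ℕ :=
    fun i => (if i = 0 then k - 2 else 0) + (if i = 1 then 2 else 0) with hβ0
  have hmemα : α0 ∈ Finset.Nat.antidiagonalTuple n (d / 2) := by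
    rw [Finset.Nat.mem_antidiagonalTuple]
    rw [hα0, Finset.sum_ite_eq' Finset.univ (0 : Fin n) (fun _ => k),
      if_pos (Finset.mem_univ _)]
  have hmemβ : β0 ∈ Finset.Nat.antidiagonalTuple n (d / 2) := by
    rw [Finset.Nat.mem_antidiagonalTuple, hβ0]
    rw [Finset.sum_add_distrib,
      Finset.sum_ite_eq' Finset.univ (0 : Fin n) (fun _ => k - 2),
      Finset.sum_ite_eq' Finset.univ (1 : Fin n) (fun _ => 2),
      if_pos (Finset.mem_univ _), if_pos (Finset.mem_univ _)]
    omega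
  set a0 : Finset.Nat.antidiagonalTuple n (d / 2) := ⟨α0, hmemα⟩ with ha0
  set b0 : Finset.Nat.antidiagonalTuple n (d / 2) := ⟨β0, hmemβ⟩ with hb0
  have h10 : (1 : Fin n) ≠ 0 := fun hc => h01 hc.symm
  have hα00 : α0 0 = k := if_pos rfl
  have hα01 : α0 1 = 0 := if_neg h10
  have hα0j : ∀ j : Fin n, j ≠ 0 → α0 j = 0 := fun j hj => if_neg hj
  have hβ00 : β0 0 = k - 2 := by
    show (if (0:Fin n) = 0 then k - 2 else 0) + (if (0:Fin n) = 1 then 2 else 0) = k - 2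
    rw [if_pos rfl, if_neg h01, add_zero]
  have hβ01 : β0 1 = 2 := by
    show (if (1:Fin n) = 0 then k - 2 else 0) + (if (1:Fin n) = 1 then 2 else 0) = 2
    rw [if_neg h10, if_pos rfl, zero_add]
  have hβ0j : ∀ j : Fin n, j ≠ 0 → j ≠ 1 → β0 j = 0 := fun j hj hj1 => by
    show (if j = 0 then k - 2 else 0) + (if j = 1 then 2 else 0) = 0
    rw [if_neg hj, if_neg hj1, add_zero]
  have hab : a0 ≠ b0 := by
    intro hc
    have h5 := congrFun (congrArg Subtype.val hc) 1
    rw [show (↑a0 : Fin n → ℕ) 1 = α0 1 from rfl, show (↑b0 : Fin n → ℕ) 1 = β0 1 from rfl,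
      hα01, hβ01] at h5
    omega
  -- product identities
  have hprod1 : ∀ x : Fin n → ℝ, ∏ i, x i ^ (α0 i + α0 i) = x 0 ^ d := by
    intro x
    rw [Finset.prod_eq_single 0]
    · rw [hα00, h2k]
    · intro j _ hj; rw [hα0j j hj, pow_zero]
    · intro hj; exact absurd (Finset.mem_univ _) hj
  have hprod2 : ∀ x : Fin n → ℝ, ∏ i, x i ^ (α0 i + β0 i) = x 0 ^ (d - 2) * x 1 ^ 2 := by
    intro x
    rw [← Finset.prod_subset (Finset.subset_univ ({0, 1} : Finset (Fin n)))
      (fun j _ hj => ?_)]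
    · rw [Finset.prod_pair h01]
      have e0 : α0 0 + β0 0 = d - 2 := by rw [hα00, hβ00]; omega
      have e1 : α0 1 + β0 1 = 2 := by rw [hα01, hβ01]
      rw [e0, e1]
    · simp only [Finset.mem_insert, Finset.mem_singleton, not_or] at hj
      rw [hα0j j hj.1, hβ0j j hj.1 hj.2, pow_zero]
  have hprod2' : ∀ x : Fin n → ℝ, ∏ i, x i ^ (β0 i + α0 i) = x 0 ^ (d - 2) * x 1 ^ 2 := by
    intro x
    rw [Finset.prod_congr rfl fun i _ => by rw [add_comm (β0 i) (α0 i)]]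
    exact hprod2 x
  -- volume facts
  set V := (volume (B n d)).toReal with hV
  have hVpos : 0 < V :=
    ENNReal.toReal_pos (volume_B_pos hn0 hd0).ne' (volume_B_ne_top hd' hd0)
  have hndpos : (0:ℝ) < (n:ℝ) + d := by positivity
  set c : ℝ := ((n:ℝ) + d) / V with hc
  have hcpos : 0 < c := by positivity
  set A := ((1 : Matrix (Finset.Nat.antidiagonalTuple n (d / 2))
            (Finset.Nat.antidiagonalTuple n (d / 2)) ℝ)
          - ((n + d : ℝ) / (volume {x : Fin n → ℝ | ∑ i, x i ^ d ≤ 1}).toReal) •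
            Matrix.of (fun α β :
                Finset.Nat.antidiagonalTuple n (d / 2) =>
              ∫ x in {x : Fin n → ℝ | ∑ i, x i ^ d ≤ 1},
                ∏ i, x i ^ ((α : Fin n → ℕ) i + (β : Fin n → ℕ) i))) with hA
  have hBset : {x : Fin n → ℝ | ∑ i, x i ^ d ≤ 1} = B n d := rfl
  -- entries
  have haa : A a0 a0 = 0 := by
    rw [hA]
    simp only [Matrix.sub_apply, Matrix.smul_apply, Matrix.of_apply, smul_eq_mul,
      Matrix.one_apply_eq]
    rw [show (fun x : Fin n → ℝ => ∏ i, x i ^ ((a0 : Fin n → ℕ) i + (a0 : Fin n → ℕ) i))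
      = fun x => x 0 ^ d from funext hprod1]
    rw [hBset, integral_pure_moment hd' hn0 hd0, ← hV, ← hc]
    rw [hc]
    field_simp
    simp
  set I2 := ∫ x in B n d, x 0 ^ (d - 2) * x 1 ^ 2 with hI2
  have hI2pos : 0 < I2 := integral_mixed_pos hd' hn0 hd0
  have hab' : A a0 b0 = -(c * I2) := by
    rw [hA]
    simp only [Matrix.sub_apply, Matrix.smul_apply, Matrix.of_apply, smul_eq_mul,
      Matrix.one_apply_ne hab]
    rw [show (fun x : Fin n → ℝ => ∏ i, x i ^ ((a0 : Fin n → ℕ) i + (b0 : Fin n → ℕ) i))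
      = fun x => x 0 ^ (d - 2) * x 1 ^ 2 from funext hprod2]
    rw [hBset, ← hI2, ← hc]
    ring
  have hba' : A b0 a0 = -(c * I2) := by
    rw [hA]
    simp only [Matrix.sub_apply, Matrix.smul_apply, Matrix.of_apply, smul_eq_mul,
      Matrix.one_apply_ne (Ne.symm hab)]
    rw [show (fun x : Fin n → ℝ => ∏ i, x i ^ ((b0 : Fin n → ℕ) i + (a0 : Fin n → ℕ) i))
      = fun x => x 0 ^ (d - 2) * x 1 ^ 2 from funext hprod2']
    rw [hBset, ← hI2, ← hc]
    ring
  -- quadratic form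
  have hquad : ∀ t : ℝ,
      0 ≤ t * (A a0 a0 * t + A a0 b0 * 1) + 1 * (A b0 a0 * t + A b0 b0 * 1) := by
    intro t
    have := (Matrix.posSemidef_iff_dotProduct_mulVec.mp h).2 (Pi.single a0 t + Pi.single b0 1)
    simp only [star_trivial, Matrix.mulVec_add, Matrix.mulVec_single, dotProduct_add,
      add_dotProduct, single_dotProduct, Pi.add_apply, one_mul, mul_one,
      Pi.smul_apply, Matrix.col_apply, op_smul_eq_mul] at this
    nlinarith [this]
  set e := A b0 b0 with he
  have hb : -(c * I2) < 0 := by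
    have : 0 < c * I2 := mul_pos hcpos hI2pos
    linarith
  set t0 : ℝ := (e + 1) / (2 * (c * I2)) with ht0
  have := hquad t0
  rw [haa, hab', hba'] at this
  have hkey : t0 * (0 * t0 + -(c * I2) * 1) + 1 * (-(c * I2) * t0 + e * 1) = -1 := by
    rw [ht0]
    field_simp
    ring
  rw [hkey] at this
  linarith
end

section
/- Let d > 0 be rational. The generalized polynomial g*(x) = Σ_{i=1}^n |x_i|^d uniquely minimizes ‖g‖₁ over all finite linear combinations g(x) = Σ_α g_α |x|^α (α ∈ Q^n nonnegative with |α| = d) whose sublevel set {x : g(x) ≤ 1} has volume at most vol({x : Σ_i |x_i|^d ≤ 1}). -/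
open MeasureTheory Finset

-- aux 1: monomial nonneg + AM bound
lemma mono_nonneg {n : ℕ} (a x : Fin n → ℝ) : 0 ≤ ∏ i, |x i| ^ (a i) :=
  Finset.prod_nonneg fun i _ => Real.rpow_nonneg (abs_nonneg _) _

lemma mono_le_AM {n : ℕ} {d : ℝ} (hd : 0 < d) (a : Fin n → ℝ)
    (ha : ∀ i, 0 ≤ a i) (hsum : ∑ i, a i = d) (x : Fin n → ℝ) :
    ∏ i, |x i| ^ a i ≤ ∑ i, a i / d * |x i| ^ d := by
  have := Real.geom_mean_le_arith_mean_weighted univ (fun i => a i / d)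
    (fun i => |x i| ^ d) (fun i _ => div_nonneg (ha i) hd.le)
    (by rw [← Finset.sum_div, hsum, div_self hd.ne'])
    (fun i _ => Real.rpow_nonneg (abs_nonneg _) _)
  calc ∏ i, |x i| ^ a i = ∏ i, (|x i| ^ d) ^ (a i / d) := by
        refine Finset.prod_congr rfl fun i _ => ?_
        rw [← Real.rpow_mul (abs_nonneg _)]
        congr 1; field_simp
    _ ≤ _ := this

lemma rho_lt_top {n : ℕ} {d : ℝ} (hd : 0 < d) :
    volume {x : Fin n → ℝ | ∑ i, |x i| ^ d ≤ 1} < ⊤ := by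
  have hsub : {x : Fin n → ℝ | ∑ i, |x i| ^ d ≤ 1} ⊆
      Set.pi Set.univ (fun _ : Fin n => Set.Icc (-1 : ℝ) 1) := by
    intro x hx i _
    have hterm : |x i| ^ d ≤ 1 := by
      have h0 : ∀ j ∈ univ, (0:ℝ) ≤ |x j| ^ d := fun j _ => Real.rpow_nonneg (abs_nonneg _) _
      calc |x i| ^ d ≤ ∑ j, |x j| ^ d := Finset.single_le_sum h0 (mem_univ i)
        _ ≤ 1 := hx
    have habs : |x i| ≤ 1 := by
      by_contra h
      push_neg at h
      have h2 : (1:ℝ) < |x i| ^ d :=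
        (Real.one_lt_rpow_iff_of_pos (lt_trans one_pos h)).mpr (Or.inl ⟨h, hd⟩)
      linarith
    constructor <;> [linarith [neg_abs_le (x i)]; linarith [le_abs_self (x i)]]
  calc volume {x : Fin n → ℝ | ∑ i, |x i| ^ d ≤ 1}
      ≤ volume (Set.pi Set.univ (fun _ : Fin n => Set.Icc (-1 : ℝ) 1)) := measure_mono hsub
    _ = ∏ _i : Fin n, volume (Set.Icc (-1 : ℝ) 1) := volume_pi_pi _
    _ < ⊤ := by
        rw [Real.volume_Icc]
        exact ENNReal.prod_lt_top fun i _ => ENNReal.ofReal_lt_top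

lemma rho_pos {n : ℕ} {d : ℝ} (hd : 0 < d) :
    0 < volume {x : Fin n → ℝ | ∑ i, |x i| ^ d ≤ 1} := by
  set r : ℝ := ((n : ℝ) + 1) ^ (-(1/d)) with hr
  have hrpos : 0 < r := Real.rpow_pos_of_pos (by positivity) _
  have hrd : r ^ d = ((n:ℝ) + 1)⁻¹ := by
    rw [hr, ← Real.rpow_mul (by positivity), neg_mul, one_div,
      inv_mul_cancel₀ hd.ne', Real.rpow_neg_one]
  have hsub : Set.pi Set.univ (fun _ : Fin n => Set.Icc (-r) r) ⊆
      {x : Fin n → ℝ | ∑ i, |x i| ^ d ≤ 1} := by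
    intro x hx
    have hxb : ∀ i, |x i| ≤ r := by
      intro i
      have := hx i (Set.mem_univ i)
      exact abs_le.mpr this
    have : ∑ i, |x i| ^ d ≤ ∑ _i : Fin n, r ^ d :=
      Finset.sum_le_sum fun i _ =>
        Real.rpow_le_rpow (abs_nonneg _) (hxb i) hd.le
    calc ∑ i, |x i| ^ d ≤ ∑ _i : Fin n, r ^ d := this
      _ = (n : ℝ) * ((n:ℝ)+1)⁻¹ := by rw [Finset.sum_const, hrd]; simp [mul_comm]
      _ ≤ 1 := by
          rw [mul_inv_le_iff₀ (by positivity), one_mul]; linarith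
  refine lt_of_lt_of_le ?_ (measure_mono hsub)
  rw [volume_pi_pi]
  refine CanonicallyOrderedAdd.prod_pos.mpr fun i _ => ?_
  rw [Real.volume_Icc]
  have : (0:ℝ) < r - -r := by linarith
  simpa using ENNReal.ofReal_pos.mpr this

-- cylinder lemma
lemma cyl_vol_top {n : ℕ} (A : Set (Fin n → ℝ)) (j : Fin n) {ε : ℝ} (hε : 0 < ε)
    (h : ∀ x : Fin n → ℝ, (∀ i, i ≠ j → |x i| ≤ ε) → x ∈ A) :
    volume A = ⊤ := by
  have hsub : Set.pi Set.univ (fun i : Fin n => if i = j then Set.univ else Set.Icc (-ε) ε)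
      ⊆ A := by
    intro x hx
    refine h x fun i hij => ?_
    have := hx i (Set.mem_univ i)
    dsimp only at this
    rw [if_neg hij] at this
    exact abs_le.mpr this
  refine top_le_iff.mp ?_
  calc (⊤ : ENNReal)
      = volume (Set.pi Set.univ (fun i : Fin n => if i = j then Set.univ else Set.Icc (-ε) ε)) := by
        rw [volume_pi_pi]
        rw [← Finset.prod_erase_mul _ _ (mem_univ j)]
        rw [if_pos rfl, Real.volume_univ, ENNReal.mul_top]
        · refine Finset.prod_ne_zero_iff.mpr fun i hi => ?_
          rw [if_neg (Finset.ne_of_mem_erase hi), Real.volume_Icc]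
          exact (ENNReal.ofReal_pos.mpr (by linarith)).ne'
    _ ≤ volume A := measure_mono hsub

-- scaling lemma
lemma scaled_vol {n : ℕ} {d : ℝ} (hd : 0 < d) (w : Fin n → ℝ) (hw : ∀ i, 0 < w i) :
    volume {x : Fin n → ℝ | ∑ i, w i * |x i| ^ d ≤ 1}
      = ENNReal.ofReal (∏ i, (w i) ^ (-(1/d))) *
        volume {x : Fin n → ℝ | ∑ i, |x i| ^ d ≤ 1} := by
  set v : Fin n → ℝ := fun i => (w i) ^ (-(1/d)) with hv
  have hvpos : ∀ i, 0 < v i := fun i => Real.rpow_pos_of_pos (hw i) _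
  have hvd : ∀ i, (v i) ^ d = (w i)⁻¹ := by
    intro i
    rw [hv, ← Real.rpow_mul (hw i).le, neg_mul, one_div, inv_mul_cancel₀ hd.ne',
      Real.rpow_neg_one]
  set f : (Fin n → ℝ) →ₗ[ℝ] (Fin n → ℝ) := Matrix.toLin' (Matrix.diagonal v) with hf
  have hfapp : ∀ y i, f y i = v i * y i := by
    intro y i
    rw [hf, Matrix.toLin'_apply, Matrix.mulVec_diagonal]
  have himg : f '' {x : Fin n → ℝ | ∑ i, |x i| ^ d ≤ 1}
      = {x : Fin n → ℝ | ∑ i, w i * |x i| ^ d ≤ 1} := by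
    have keyid : ∀ y : Fin n → ℝ, ∑ i, w i * |f y i| ^ d = ∑ i, |y i| ^ d := by
      intro y
      refine Finset.sum_congr rfl fun i _ => ?_
      rw [hfapp, abs_mul, abs_of_pos (hvpos i),
        Real.mul_rpow (hvpos i).le (abs_nonneg _), hvd i, ← mul_assoc,
        mul_inv_cancel₀ (hw i).ne', one_mul]
    ext x
    constructor
    · rintro ⟨y, hy, rfl⟩
      simpa [Set.mem_setOf_eq, keyid y] using hy
    · intro hx
      refine ⟨fun i => (w i) ^ (1/d) * x i, ?_, ?_⟩
      · have : ∀ i, |(w i) ^ (1/d) * x i| ^ d = w i * |x i| ^ d := by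
          intro i
          rw [abs_mul, abs_of_pos (Real.rpow_pos_of_pos (hw i) _),
            Real.mul_rpow (Real.rpow_pos_of_pos (hw i) _).le (abs_nonneg _),
            ← Real.rpow_mul (hw i).le, one_div, inv_mul_cancel₀ hd.ne', Real.rpow_one]
        show ∑ i, |(w i) ^ (1/d) * x i| ^ d ≤ 1
        rw [Finset.sum_congr rfl fun i _ => this i]
        exact hx
      · funext i
        rw [hfapp, hv, ← mul_assoc, ← Real.rpow_add (hw i)]
        norm_num
  have hdet : LinearMap.det f = ∏ i, v i := by
    rw [hf, LinearMap.det_toLin', Matrix.det_diagonal]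
  rw [← himg, Measure.addHaar_image_linearMap, hdet, abs_of_pos (Finset.prod_pos fun i _ => hvpos i)]

set_option maxHeartbeats 1000000 in
theorem l1_unique_minimizer_generalized
    (n : ℕ) (d : ℚ) (hd : 0 < d)
    (c : (Fin n → ℚ) →₀ ℝ)
    (hsupp : ∀ α ∈ c.support, (∀ i, 0 ≤ α i) ∧ ∑ i, α i = d)
    (hvol : volume {x : Fin n → ℝ |
        ∑ α ∈ c.support, c α * ∏ i, |x i| ^ ((α i : ℝ)) ≤ 1}
      ≤ volume {x : Fin n → ℝ | ∑ i, |x i| ^ ((d : ℝ)) ≤ 1})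
    (hne : c ≠ ∑ i : Fin n,
        Finsupp.single (fun j => if j = i then d else 0) (1 : ℝ)) :
    (n : ℝ) < ∑ α ∈ c.support, |c α| := by
  have hD : (0:ℝ) < (d:ℝ) := by exact_mod_cast hd
  -- n = 0 case
  rcases Nat.eq_zero_or_pos n with hn | hn
  · subst hn
    exfalso
    apply hne
    have hs : c.support = ∅ := by
      by_contra hs
      obtain ⟨α, hα⟩ := Finset.nonempty_iff_ne_empty.mpr hs
      have := (hsupp α hα).2
      simp at this
      exact absurd this.symm hd.ne'
    rw [Finsupp.support_eq_empty.mp hs]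
    simp
  by_contra hcon
  push_neg at hcon
  -- the weights
  set w : Fin n → ℝ := fun i => ∑ α ∈ c.support, |c α| * (α i : ℝ) / (d:ℝ) with hw_def
  have hw0 : ∀ i, 0 ≤ w i := fun i =>
    Finset.sum_nonneg fun α hα => div_nonneg
      (mul_nonneg (abs_nonneg _) (by exact_mod_cast (hsupp α hα).1 i)) hD.le
  -- sum of weights = l1 norm
  have hsumw : ∑ i, w i = ∑ α ∈ c.support, |c α| := by
    rw [hw_def, Finset.sum_comm]
    refine Finset.sum_congr rfl fun α hα => ?_
    rw [← Finset.sum_div, ← Finset.mul_sum]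
    have : (∑ i, (α i : ℝ)) = (d : ℝ) := by
      exact_mod_cast congrArg (fun q : ℚ => (q : ℝ)) (hsupp α hα).2
    rw [this, mul_div_assoc, div_self hD.ne', mul_one]
  -- pointwise domination
  have key : ∀ x : Fin n → ℝ,
      (∑ α ∈ c.support, c α * ∏ i, |x i| ^ ((α i : ℝ))) ≤ ∑ i, w i * |x i| ^ ((d:ℝ)) := by
    intro x
    have step1 : (∑ α ∈ c.support, c α * ∏ i, |x i| ^ ((α i : ℝ)))
        ≤ ∑ α ∈ c.support, |c α| * ∑ i, (α i : ℝ) / (d:ℝ) * |x i| ^ ((d:ℝ)) := by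
      refine Finset.sum_le_sum fun α hα => ?_
      have h1 : c α * ∏ i, |x i| ^ ((α i : ℝ)) ≤ |c α| * ∏ i, |x i| ^ ((α i : ℝ)) :=
        mul_le_mul_of_nonneg_right (le_abs_self _) (mono_nonneg _ x)
      refine h1.trans (mul_le_mul_of_nonneg_left ?_ (abs_nonneg _))
      refine mono_le_AM hD (fun i => (α i : ℝ))
        (fun i => by simpa using (Rat.cast_nonneg (K := ℝ)).mpr ((hsupp α hα).1 i)) ?_ x
      exact_mod_cast congrArg (fun q : ℚ => (q : ℝ)) (hsupp α hα).2
    refine step1.trans (le_of_eq ?_)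
    simp_rw [Finset.mul_sum]
    rw [Finset.sum_comm]
    refine Finset.sum_congr rfl fun i _ => ?_
    rw [hw_def, Finset.sum_mul]
    refine Finset.sum_congr rfl fun α _ => ?_
    ring
  -- finiteness of target volume
  have hrho_top := rho_lt_top (n := n) hD
  have hrho_pos := rho_pos (n := n) hD
  have hvol_ne_top :
      volume {x : Fin n → ℝ | ∑ α ∈ c.support, c α * ∏ i, |x i| ^ ((α i : ℝ)) ≤ 1} ≠ ⊤ :=
    (lt_of_le_of_lt hvol hrho_top).ne
  -- all weights positive, else infinite cylinder
  have hwpos : ∀ i, 0 < w i := by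
    by_contra hneg
    push_neg at hneg
    obtain ⟨j, hj⟩ := hneg
    have hwj : w j = 0 := le_antisymm hj (hw0 j)
    have hαj : ∀ α ∈ c.support, α j = 0 := by
      intro α hα
      have hz := (Finset.sum_eq_zero_iff_of_nonneg (fun β hβ => div_nonneg
        (mul_nonneg (abs_nonneg _) (by exact_mod_cast (hsupp β hβ).1 j)) hD.le)).mp hwj α hα
      have hc : c α ≠ 0 := Finsupp.mem_support_iff.mp hα
      have : |c α| * (α j : ℝ) = 0 := by
        rcases div_eq_zero_iff.mp hz with h | h
        · exact h
        · exact absurd h hD.ne'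
      rcases mul_eq_zero.mp this with h | h
      · exact absurd (abs_eq_zero.mp h) hc
      · exact_mod_cast h
    set M : ℝ := ∑ α ∈ c.support, |c α| with hM
    have hM0 : 0 ≤ M := Finset.sum_nonneg fun α _ => abs_nonneg _
    set ε : ℝ := (M + 1) ^ (-(1/(d:ℝ))) with hε
    have hεpos : 0 < ε := Real.rpow_pos_of_pos (by linarith) _
    have hεd : ε ^ (d:ℝ) = (M + 1)⁻¹ := by
      rw [hε, ← Real.rpow_mul (by linarith), neg_mul, one_div,
        inv_mul_cancel₀ hD.ne', Real.rpow_neg_one]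
    have hcyl := cyl_vol_top
      {x : Fin n → ℝ | ∑ α ∈ c.support, c α * ∏ i, |x i| ^ ((α i : ℝ)) ≤ 1} j hεpos ?_
    · exact hvol_ne_top hcyl
    · intro x hx
      have hmono : ∀ α ∈ c.support, (∏ i, |x i| ^ ((α i : ℝ))) ≤ ε ^ (d:ℝ) := by
        intro α hα
        have hfac : ∀ i, |x i| ^ ((α i : ℝ)) ≤ ε ^ ((α i : ℝ)) := by
          intro i
          by_cases hij : i = j
          · subst hij
            rw [hαj α hα]
            simp
          · exact Real.rpow_le_rpow (abs_nonneg _) (hx i hij)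
              (by exact_mod_cast (hsupp α hα).1 i)
        calc ∏ i, |x i| ^ ((α i : ℝ)) ≤ ∏ i, ε ^ ((α i : ℝ)) :=
              Finset.prod_le_prod (fun i _ => Real.rpow_nonneg (abs_nonneg _) _)
                (fun i _ => hfac i)
          _ = ε ^ (∑ i, (α i : ℝ)) := (Real.rpow_sum_of_pos hεpos _ _).symm
          _ = ε ^ (d:ℝ) := by
              congr 1
              exact_mod_cast congrArg (fun q : ℚ => (q : ℝ)) (hsupp α hα).2
      show ∑ α ∈ c.support, c α * ∏ i, |x i| ^ ((α i : ℝ)) ≤ 1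
      calc ∑ α ∈ c.support, c α * ∏ i, |x i| ^ ((α i : ℝ))
          ≤ ∑ α ∈ c.support, |c α| * ε ^ (d:ℝ) := Finset.sum_le_sum fun α hα =>
            le_trans (mul_le_mul_of_nonneg_right (le_abs_self _) (mono_nonneg _ x))
              (mul_le_mul_of_nonneg_left (hmono α hα) (abs_nonneg _))
        _ = M * (M+1)⁻¹ := by rw [← Finset.sum_mul, hεd]
        _ ≤ 1 := by rw [mul_inv_le_iff₀ (by linarith), one_mul]; linarith
  -- scaling: product of weights ≥ 1
  have hTsub : {x : Fin n → ℝ | ∑ i, w i * |x i| ^ ((d:ℝ)) ≤ 1} ⊆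
      {x : Fin n → ℝ | ∑ α ∈ c.support, c α * ∏ i, |x i| ^ ((α i : ℝ)) ≤ 1} :=
    fun x hx => le_trans (key x) hx
  have hscale := scaled_vol hD w hwpos
  have hprod_le : ENNReal.ofReal (∏ i, (w i) ^ (-(1/(d:ℝ)))) ≤ 1 := by
    rw [← ENNReal.mul_le_mul_iff_left hrho_pos.ne' hrho_top.ne, one_mul, ← hscale]
    exact le_trans (measure_mono hTsub) hvol
  have hPpos : 0 < ∏ i, w i := Finset.prod_pos fun i _ => hwpos i
  have hP1 : 1 ≤ ∏ i, w i := by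
    have h1 : (∏ i, w i) ^ (-(1/(d:ℝ))) ≤ 1 := by
      rw [← Real.finset_prod_rpow univ w (fun i _ => (hwpos i).le)]
      exact ENNReal.ofReal_le_one.mp hprod_le
    by_contra hlt
    push_neg at hlt
    have : 1 < (∏ i, w i) ^ (-(1/(d:ℝ))) :=
      (Real.one_lt_rpow_iff_of_pos hPpos).mpr
        (Or.inr ⟨hlt, by rw [neg_lt, neg_zero]; positivity⟩)
    linarith
  -- all weights equal 1
  have hw1 : ∀ i, w i = 1 := by
    have hlogsum : 0 ≤ ∑ i, Real.log (w i) := by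
      rw [← Real.log_prod (fun i _ => (hwpos i).ne')]
      exact Real.log_nonneg hP1
    have hsub : ∑ i, (w i - 1) ≤ 0 := by
      rw [Finset.sum_sub_distrib, hsumw]
      simp only [Finset.sum_const, Finset.card_univ, Fintype.card_fin, nsmul_eq_mul, mul_one]
      linarith
    by_contra hne1
    push_neg at hne1
    obtain ⟨j, hj⟩ := hne1
    have hstrict : ∑ i, Real.log (w i) < ∑ i, (w i - 1) :=
      Finset.sum_lt_sum (fun i _ => Real.log_le_sub_one_of_pos (hwpos i))
        ⟨j, Finset.mem_univ j, Real.log_lt_sub_one_of_pos (hwpos j) hj⟩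
    linarith
  have hNn : ∑ α ∈ c.support, |c α| = (n : ℝ) := by
    rw [← hsumw]
    simp [hw1]
  -- the pure monomials
  set del : Fin n → (Fin n → ℚ) := fun i j => if j = i then d else 0 with hdel_def
  have hdelself : ∀ i, del i i = d := fun i => if_pos rfl
  have hdelne : ∀ i k : Fin n, i ≠ k → del k i = 0 := fun i k h => if_neg h
  have hdelinj : Function.Injective del := by
    intro i k h
    by_contra hik
    have h1 : del i i = d := hdelself i
    rw [h] at h1
    rw [hdelne i k hik] at h1
    exact hd.ne' h1.symm
  by_cases hδ : ∀ α ∈ c.support, ∃ i, α = del i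
  · -- case (b): all monomials pure
    have habs1 : ∀ i, |c (del i)| = 1 := by
      intro i
      have hwi : w i = |c (del i)| := by
        rw [hw_def]
        dsimp only
        rw [Finset.sum_eq_single (del i)]
        · rw [hdelself i, mul_div_assoc, div_self hD.ne', mul_one]
        · intro β hβ hβne
          obtain ⟨k, rfl⟩ := hδ β hβ
          have hik : i ≠ k := fun h => hβne (by rw [h])
          rw [hdelne i k hik]
          simp
        · intro h
          rw [Finsupp.notMem_support_iff.mp h]
          simp
      rw [hw1 i] at hwi
      exact hwi.symm
    have hmem : ∀ i, del i ∈ c.support := by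
      intro i
      refine Finsupp.mem_support_iff.mpr fun h0 => ?_
      have := habs1 i
      rw [h0] at this
      simp at this
    by_cases hone : ∀ i, c (del i) = 1
    · -- c equals the reference finsupp
      exfalso
      apply hne
      ext α
      rw [Finsupp.finset_sum_apply]
      simp only [Finsupp.single_apply]
      by_cases hαs : α ∈ c.support
      · obtain ⟨k, rfl⟩ := hδ α hαs
        rw [Finset.sum_eq_single k]
        · rw [if_pos rfl]
          exact hone k
        · intro i _ hik
          rw [if_neg fun h => hik (hdelinj h)]
        · intro h
          exact absurd (Finset.mem_univ k) h
      · rw [Finsupp.notMem_support_iff.mp hαs]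
        symm
        refine Finset.sum_eq_zero fun i _ => ?_
        refine if_neg fun h => hαs ?_
        rw [← h]
        exact hmem i
    · -- some coefficient is -1 : infinite cylinder
      push_neg at hone
      obtain ⟨j0, hj0⟩ := hone
      have hcneg : c (del j0) = -1 := by
        rcases abs_eq (zero_le_one) |>.mp (habs1 j0) with h | h
        · exact absurd h hj0
        · exact h
      have hnpos : (0:ℝ) < (n:ℝ) := by exact_mod_cast hn
      set ε : ℝ := (n:ℝ) ^ (-(1/(d:ℝ))) with hε
      have hεpos : 0 < ε := Real.rpow_pos_of_pos hnpos _
      have hεd : ε ^ (d:ℝ) = (n:ℝ)⁻¹ := by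
        rw [hε, ← Real.rpow_mul hnpos.le, neg_mul, one_div,
          inv_mul_cancel₀ hD.ne', Real.rpow_neg_one]
      refine hvol_ne_top (cyl_vol_top _ j0 hεpos ?_)
      intro x hx
      show ∑ α ∈ c.support, c α * ∏ i, |x i| ^ ((α i : ℝ)) ≤ 1
      have hterm : ∀ α ∈ c.support, c α * ∏ i, |x i| ^ ((α i : ℝ)) ≤ ε ^ (d:ℝ) := by
        intro α hα
        obtain ⟨k, rfl⟩ := hδ α hα
        have hm : (∏ i, |x i| ^ ((del k i : ℝ))) = |x k| ^ ((d:ℝ)) := by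
          rw [Finset.prod_eq_single k]
          · rw [hdelself k]
          · intro i _ hik
            rw [hdelne i k hik]
            simp
          · intro h
            exact absurd (Finset.mem_univ k) h
        rw [hm]
        by_cases hk : k = j0
        · subst hk
          rw [hcneg]
          have h1 := Real.rpow_nonneg (abs_nonneg (x k)) ((d:ℝ))
          have h2 := Real.rpow_nonneg hεpos.le ((d:ℝ))
          nlinarith
        · calc c (del k) * |x k| ^ ((d:ℝ)) ≤ |c (del k)| * |x k| ^ ((d:ℝ)) :=
              mul_le_mul_of_nonneg_right (le_abs_self _)
                (Real.rpow_nonneg (abs_nonneg _) _)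
          _ = |x k| ^ ((d:ℝ)) := by rw [habs1 k, one_mul]
          _ ≤ ε ^ ((d:ℝ)) := Real.rpow_le_rpow (abs_nonneg _) (hx k hk) hD.le
      have hcard : (c.support.card : ℝ) ≤ (n:ℝ) := by
        have hsub : c.support ⊆ Finset.image del Finset.univ := fun α hα => by
          obtain ⟨k, hk⟩ := hδ α hα
          exact Finset.mem_image.mpr ⟨k, Finset.mem_univ k, hk.symm⟩
        have h2 := Finset.card_le_card hsub
        have h3 := Finset.card_image_le (f := del) (s := Finset.univ)
        have h4 : c.support.card ≤ n := by simpa using h2.trans h3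
        exact_mod_cast h4
      calc ∑ α ∈ c.support, c α * ∏ i, |x i| ^ ((α i : ℝ))
          ≤ c.support.card • (ε ^ (d:ℝ)) := Finset.sum_le_card_nsmul _ _ _ hterm
        _ = (c.support.card : ℝ) * ε ^ (d:ℝ) := nsmul_eq_mul _ _
        _ ≤ (n:ℝ) * ε ^ (d:ℝ) :=
            mul_le_mul_of_nonneg_right hcard (Real.rpow_nonneg hεpos.le _)
        _ = 1 := by rw [hεd, mul_inv_cancel₀ hnpos.ne']
  · -- case (a): a mixed monomial exists
    push_neg at hδ
    obtain ⟨α0, hα0s, hα0δ⟩ := hδ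
    have hα0nn := (hsupp α0 hα0s).1
    have hα0sum := (hsupp α0 hα0s).2
    have hex : ∃ i0, 0 < α0 i0 := by
      by_contra h
      push_neg at h
      have hz : ∀ i, α0 i = 0 := fun i => le_antisymm (h i) (hα0nn i)
      rw [Finset.sum_congr rfl fun i _ => hz i] at hα0sum
      simp at hα0sum
      exact hd.ne' hα0sum.symm
    obtain ⟨i0, hi0⟩ := hex
    have hexj : ∃ j, j ≠ i0 ∧ 0 < α0 j := by
      by_contra h
      push_neg at h
      apply hα0δ i0
      have hz : ∀ j, j ≠ i0 → α0 j = 0 := fun j hj =>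
        le_antisymm (h j hj) (hα0nn j)
      funext j
      show α0 j = if j = i0 then d else 0
      by_cases hj : j = i0
      · subst hj
        rw [if_pos rfl, ← hα0sum, Finset.sum_eq_single j]
        · intro i _ hij
          exact hz i hij
        · intro hj'
          exact absurd (Finset.mem_univ j) hj'
      · rw [if_neg hj]
        exact hz j hj
    obtain ⟨j1, hj1ne, hj1⟩ := hexj
    have hcα0 : c α0 ≠ 0 := Finsupp.mem_support_iff.mp hα0s
    set θ : ℝ := |c α0| * (α0 i0 : ℝ) / (d:ℝ) with hθ
    have hθpos : 0 < θ :=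
      div_pos (mul_pos (abs_pos.mpr hcα0) (by exact_mod_cast hi0)) hD
    have hwsum1 : (∑ α ∈ c.support, |c α| * (α i0 : ℝ) / (d:ℝ)) = 1 := by
      have h1 := hw1 i0
      rw [hw_def] at h1
      exact h1
    have hθle : θ ≤ 1 := by
      rw [← hwsum1, hθ]
      exact Finset.single_le_sum (f := fun α => |c α| * (α i0 : ℝ) / (d:ℝ))
        (fun β hβ => div_nonneg (mul_nonneg (abs_nonneg _)
          (by exact_mod_cast (hsupp β hβ).1 i0)) hD.le) hα0s
    set t : ℝ := (1 - θ/2)⁻¹ with ht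
    have h2t : 0 < 1 - θ/2 := by linarith
    have htpos : 0 < t := inv_pos.mpr h2t
    have htval : t * (1 - θ/2) = 1 := inv_mul_cancel₀ h2t.ne'
    have ht1 : 1 < t := by nlinarith
    have h1θt : (1-θ)*t < 1 := by nlinarith
    set s : ℝ := t ^ ((d:ℝ)⁻¹) with hs
    have hspos : 0 < s := Real.rpow_pos_of_pos htpos _
    have hsd : s ^ (d:ℝ) = t := by
      rw [hs, ← Real.rpow_mul htpos.le, inv_mul_cancel₀ hD.ne', Real.rpow_one]
    set x0 : Fin n → ℝ := fun i => if i = i0 then s else 0 with hx0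
    have habs : ∀ i, |x0 i| ^ (d:ℝ) = if i = i0 then t else 0 := by
      intro i
      rw [hx0]
      dsimp only
      by_cases hi : i = i0
      · rw [if_pos hi, if_pos hi, abs_of_pos hspos, hsd]
      · rw [if_neg hi, if_neg hi, abs_zero, Real.zero_rpow hD.ne']
    have hHx0 : ∑ i, |x0 i| ^ (d:ℝ) = t := by
      rw [Finset.sum_congr rfl fun i _ => habs i]
      simp
    have hAMx0 : ∀ β ∈ c.support, (∏ i, |x0 i| ^ ((β i : ℝ))) ≤ (β i0 : ℝ)/(d:ℝ) * t := by
      intro β hβ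
      refine (mono_le_AM hD (fun i => (β i : ℝ))
        (fun i => by simpa using (Rat.cast_nonneg (K := ℝ)).mpr ((hsupp β hβ).1 i))
        (by exact_mod_cast congrArg (fun q : ℚ => (q : ℝ)) (hsupp β hβ).2) x0).trans
        (le_of_eq ?_)
      rw [Finset.sum_eq_single i0]
      · rw [habs i0, if_pos rfl]
      · intro i _ hii0
        rw [habs i, if_neg hii0, mul_zero]
      · intro h
        exact absurd (Finset.mem_univ i0) h
    have hm0 : (∏ i, |x0 i| ^ ((α0 i : ℝ))) = 0 := by
      refine Finset.prod_eq_zero (Finset.mem_univ j1) ?_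
      rw [hx0]
      dsimp only
      rw [if_neg hj1ne, abs_zero]
      refine Real.zero_rpow ?_
      exact_mod_cast hj1.ne'
    have hhb : ∑ α ∈ c.support, |c α| * ∏ i, |x0 i| ^ ((α i : ℝ)) ≤ (1-θ)*t := by
      rw [← Finset.add_sum_erase _ _ hα0s, hm0, mul_zero, zero_add]
      have herase : ∑ α ∈ c.support.erase α0, |c α| * (α i0 : ℝ) / (d:ℝ) = 1 - θ := by
        have hae := Finset.add_sum_erase c.support
          (fun α => |c α| * (α i0 : ℝ) / (d:ℝ)) hα0s
        rw [hwsum1] at hae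
        have hae2 : θ + ∑ α ∈ c.support.erase α0, |c α| * (α i0 : ℝ) / (d:ℝ) = 1 := by
          rw [hθ]
          exact hae
        linarith
      have hle : ∑ α ∈ c.support.erase α0, |c α| * ∏ i, |x0 i| ^ ((α i : ℝ))
          ≤ ∑ α ∈ c.support.erase α0, |c α| * (α i0 : ℝ) / (d:ℝ) * t := by
        refine Finset.sum_le_sum fun β hβ => ?_
        have h1 := hAMx0 β (Finset.mem_of_mem_erase hβ)
        calc |c β| * ∏ i, |x0 i| ^ ((β i : ℝ))
            ≤ |c β| * ((β i0 : ℝ)/(d:ℝ) * t) :=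
              mul_le_mul_of_nonneg_left h1 (abs_nonneg _)
          _ = |c β| * (β i0 : ℝ) / (d:ℝ) * t := by ring
      refine hle.trans (le_of_eq ?_)
      rw [← Finset.sum_mul, herase]
    have hcontH : Continuous fun y : Fin n → ℝ => ∑ i, |y i| ^ (d:ℝ) :=
      continuous_finset_sum _ fun i _ =>
        ((continuous_apply i).abs).rpow_const fun y => Or.inr hD.le
    have hconth : Continuous fun y : Fin n → ℝ =>
        ∑ α ∈ c.support, |c α| * ∏ i, |y i| ^ ((α i : ℝ)) :=
      continuous_finset_sum _ fun β hβ => continuous_const.mul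
        (continuous_finset_prod _ fun i _ =>
          ((continuous_apply i).abs).rpow_const fun y =>
            Or.inr (by simpa using (Rat.cast_nonneg (K := ℝ)).mpr ((hsupp β hβ).1 i)))
    set U := {y : Fin n → ℝ | (∑ α ∈ c.support, |c α| * ∏ i, |y i| ^ ((α i : ℝ))) < 1}
      ∩ {y : Fin n → ℝ | 1 < ∑ i, |y i| ^ (d:ℝ)} with hU
    have hUopen : IsOpen U :=
      (isOpen_lt hconth continuous_const).inter (isOpen_lt continuous_const hcontH)
    have hx0U : x0 ∈ U := by
      constructor
      · exact lt_of_le_of_lt hhb h1θt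
      · show 1 < ∑ i, |x0 i| ^ (d:ℝ)
        rw [hHx0]
        exact ht1
    have hUpos : 0 < volume U := hUopen.measure_pos volume ⟨x0, hx0U⟩
    have hSsub : {x : Fin n → ℝ | ∑ i, |x i| ^ ((d:ℝ)) ≤ 1} ⊆
        {x : Fin n → ℝ | ∑ α ∈ c.support, c α * ∏ i, |x i| ^ ((α i : ℝ)) ≤ 1} := by
      intro x hx
      refine le_trans (key x) ?_
      calc ∑ i, w i * |x i| ^ ((d:ℝ)) = ∑ i, |x i| ^ ((d:ℝ)) :=
            Finset.sum_congr rfl fun i _ => by rw [hw1 i, one_mul]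
        _ ≤ 1 := hx
    have hUsub : U ⊆
        {x : Fin n → ℝ | ∑ α ∈ c.support, c α * ∏ i, |x i| ^ ((α i : ℝ)) ≤ 1} := by
      intro y hy
      have h1 : (∑ α ∈ c.support, c α * ∏ i, |y i| ^ ((α i : ℝ)))
          ≤ ∑ α ∈ c.support, |c α| * ∏ i, |y i| ^ ((α i : ℝ)) :=
        Finset.sum_le_sum fun β _ =>
          mul_le_mul_of_nonneg_right (le_abs_self _) (mono_nonneg _ y)
      exact le_trans h1 (le_of_lt hy.1)
    have hdisj : Disjoint {x : Fin n → ℝ | ∑ i, |x i| ^ ((d:ℝ)) ≤ 1} U := by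
      rw [Set.disjoint_left]
      intro y hyS hyU
      have h2 : 1 < ∑ i, |y i| ^ ((d:ℝ)) := hyU.2
      exact absurd h2 (not_lt.mpr hyS)
    have hmeas := measure_union hdisj hUopen.measurableSet
      (μ := (volume : Measure (Fin n → ℝ)))
    have hchain : volume {x : Fin n → ℝ | ∑ i, |x i| ^ ((d:ℝ)) ≤ 1} + volume U
        ≤ volume {x : Fin n → ℝ | ∑ i, |x i| ^ ((d:ℝ)) ≤ 1} := by
      rw [← hmeas]
      exact le_trans (measure_mono (Set.union_subset hSsub hUsub)) hvol
    have hlt : volume {x : Fin n → ℝ | ∑ i, |x i| ^ ((d:ℝ)) ≤ 1}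
        < volume {x : Fin n → ℝ | ∑ i, |x i| ^ ((d:ℝ)) ≤ 1} + volume U :=
      ENNReal.lt_add_right hrho_top.ne hUpos.ne'
    exact absurd hchain (not_le.mpr hlt)
end
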